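/- arXiv:1703.03152 — 7 statements merged into one kernel-verified Lean document; each statement's English description precedes it below -/
import Mathlib

section
/- Let ρ_t be a rank-one orthogonal projection (a pure state) on a finite-dimensional complex Hilbert space, let N ∈ ℕ, let λ_1, …, λ_N be real numbers with 0 < Δ := λ_1 ≤ λ_2 ≤ … ≤ λ_N, and let P_1, …, P_N be positive semidefinite operators satisfying ρ_t + Σ_{l=1}^N P_l = 1 and tr(ρ_t P_l) = 0 for all l. Define W := 1 − Δ⁻¹ Σ_{l=1}^N λ_l P_l. Then for every density matrix ρ_p: (i) tr(W ρ_p) = 1 if and only if ρ_p = ρ_t, and (ii) tr(W ρ_p) ≤ tr(ρ_t ρ_p). -/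
/-!
**Statement 0** (General fidelity-witness construction, Proposition 2 of the paper).

Let `ρt` be a rank-one orthogonal projection (a pure state) on a finite-dimensional complex
Hilbert space, let `N ∈ ℕ`, let `λ 1, …, λ N` be real numbers with
`0 < Δ := λ 1 ≤ λ 2 ≤ … ≤ λ N`, and let `P 1, …, P N` be positive semidefinite operators
satisfying `ρt + ∑ l, P l = 1` and `tr (ρt * P l) = 0` for all `l`.
Define `W := 1 − Δ⁻¹ • ∑ l, λ l • P l`.  Then for every density matrix `ρp`:
(i) `tr (W ρp) = 1` iff `ρp = ρt`, and (ii) `tr (W ρp) ≤ tr (ρt ρp)`.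
-/

open Matrix
open scoped ComplexOrder

open scoped MatrixOrder in
noncomputable def Matrix.PosSemidef.sqrt {n : ℕ} {A : Matrix (Fin n) (Fin n) ℂ}
    (_hA : A.PosSemidef) : Matrix (Fin n) (Fin n) ℂ := CFC.sqrt A

open scoped MatrixOrder in
lemma Matrix.PosSemidef.posSemidef_sqrt {n : ℕ} {A : Matrix (Fin n) (Fin n) ℂ}
    (hA : A.PosSemidef) : hA.sqrt.PosSemidef := (CFC.sqrt_nonneg A).posSemidef

open scoped MatrixOrder in
lemma Matrix.PosSemidef.sqrt_mul_self {n : ℕ} {A : Matrix (Fin n) (Fin n) ℂ}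
    (hA : A.PosSemidef) : hA.sqrt * hA.sqrt = A := CFC.sqrt_mul_sqrt_self A hA.nonneg

private lemma psd_trace_nonneg' {n : ℕ} {A : Matrix (Fin n) (Fin n) ℂ}
    (hA : A.PosSemidef) : 0 ≤ A.trace := by
  refine Finset.sum_nonneg fun i _ => ?_
  have := hA.diag_nonneg (i := i)
  simpa [dotProduct, Pi.single_apply] using this

private lemma psd_mul_trace_nonneg' {n : ℕ} {A B : Matrix (Fin n) (Fin n) ℂ}
    (hA : A.PosSemidef) (hB : B.PosSemidef) : 0 ≤ (A * B).trace := by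
  have hs := hA.posSemidef_sqrt
  have h1 : A * B = hA.sqrt * (hA.sqrt * B) := by rw [← mul_assoc, hA.sqrt_mul_self]
  rw [h1, Matrix.trace_mul_comm, mul_assoc]
  rw [show hA.sqrt * (B * hA.sqrt) = hA.sqrt * B * hA.sqrtᴴ from by
    rw [hs.isHermitian.eq, mul_assoc]]
  exact psd_trace_nonneg' (hB.mul_mul_conjTranspose_same hA.sqrt)

private lemma psd_trace_zero' {n : ℕ} {A : Matrix (Fin n) (Fin n) ℂ}
    (hA : A.PosSemidef) (h : A.trace = 0) : A = 0 := by
  have hs := hA.posSemidef_sqrt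
  have hsq : hA.sqrt * hA.sqrt = A := hA.sqrt_mul_self
  have hdiag : ∀ i, A i i = ((∑ k, Complex.normSq (hA.sqrt k i) : ℝ) : ℂ) := by
    intro i
    conv_lhs => rw [← hsq]
    rw [Matrix.mul_apply]
    push_cast
    refine Finset.sum_congr rfl fun k _ => ?_
    have : hA.sqrt i k = star (hA.sqrt k i) := by
      conv_lhs => rw [← hs.isHermitian.eq]
      rfl
    rw [this]
    simp [Complex.normSq_eq_conj_mul_self, mul_comm]
  have hzero : ∀ i k, hA.sqrt k i = 0 := by
    intro i k
    have hsum : ∑ i, A i i = 0 := h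
    have hnn : ∀ i ∈ Finset.univ, (0:ℂ) ≤ A i i := by
      intro i _
      rw [hdiag i]
      exact_mod_cast Finset.sum_nonneg fun k _ => Complex.normSq_nonneg _
    have hii := (Finset.sum_eq_zero_iff_of_nonneg hnn).mp hsum i (Finset.mem_univ i)
    rw [hdiag i] at hii
    have hrsum : ∑ k, Complex.normSq (hA.sqrt k i) = 0 := by exact_mod_cast hii
    have := (Finset.sum_eq_zero_iff_of_nonneg
      (fun k _ => Complex.normSq_nonneg (hA.sqrt k i))).mp hrsum k (Finset.mem_univ k)
    exact Complex.normSq_eq_zero.mp this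
  have hS0 : hA.sqrt = 0 := by ext i k; exact hzero k i
  calc A = hA.sqrt * hA.sqrt := hsq.symm
    _ = 0 := by rw [hS0, mul_zero]

private lemma psd_mul_eq_zero' {n : ℕ} {A B : Matrix (Fin n) (Fin n) ℂ}
    (hA : A.PosSemidef) (hB : B.PosSemidef) (h : (A * B).trace = 0) : A * B = 0 := by
  set S := hB.sqrt with hSdef
  set T := hA.sqrt with hTdef
  have hSh : Sᴴ = S := hB.posSemidef_sqrt.isHermitian
  have hTh : Tᴴ = T := hA.posSemidef_sqrt.isHermitian
  have hSS : S * S = B := hB.sqrt_mul_self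
  have hTT : T * T = A := hA.sqrt_mul_self
  have h1 : (S * A * S).trace = 0 := by
    rw [Matrix.trace_mul_comm, ← mul_assoc, hSS, Matrix.trace_mul_comm, h]
  have h2 : S * A * S = 0 := by
    refine psd_trace_zero' ?_ h1
    have := hA.mul_mul_conjTranspose_same S
    rwa [hSh] at this
  have h3 : (S * T) * (S * T)ᴴ = 0 := by
    rw [Matrix.conjTranspose_mul, hSh, hTh, show S * T * (T * S) = S * (T * T) * S from by
      simp only [mul_assoc], hTT]
    exact h2
  have h4 : S * T = 0 := Matrix.self_mul_conjTranspose_eq_zero.mp h3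
  calc A * B = T * (S * T)ᴴ * S := by
        rw [Matrix.conjTranspose_mul, hSh, hTh, ← hTT, ← hSS]; simp only [mul_assoc]
    _ = 0 := by rw [h4, conjTranspose_zero, mul_zero, zero_mul]

private lemma rank_one_proj_exists' {n : ℕ} {ρt : Matrix (Fin n) (Fin n) ℂ}
    (hherm : ρt.IsHermitian) (hproj : ρt * ρt = ρt) (hrank : ρt.rank = 1) :
    ∃ v : Fin n → ℂ, ∀ i k, ρt i k = v i * star (v k) := by
  have hspec := hherm.spectral_theorem
  set U : Matrix (Fin n) (Fin n) ℂ := (hherm.eigenvectorUnitary : Matrix (Fin n) (Fin n) ℂ)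
    with hUdef
  set f : Fin n → ℂ := RCLike.ofReal ∘ hherm.eigenvalues with hfdef
  have hUU : U * star U = 1 := (Matrix.mem_unitaryGroup_iff).mp hherm.eigenvectorUnitary.2
  have hD : star U * ρt * U = diagonal f := by
    rw [hspec, Unitary.conjStarAlgAut_apply]; simp only [hUdef, mul_assoc]
    rw [Unitary.coe_star_mul_self, mul_one, ← mul_assoc, Unitary.coe_star_mul_self, one_mul]
  have hDD : diagonal f * diagonal f = diagonal f := by
    calc diagonal f * diagonal f = (star U * ρt * U) * (star U * ρt * U) := by rw [hD]
    _ = star U * (ρt * (U * star U) * ρt) * U := by simp only [mul_assoc]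
    _ = star U * (ρt * ρt) * U := by rw [hUU, mul_one]
    _ = diagonal f := by rw [hproj, hD]
  have hidem : ∀ i, hherm.eigenvalues i * hherm.eigenvalues i = hherm.eigenvalues i := by
    intro i
    have h1 : (diagonal f * diagonal f) i i = (diagonal f) i i := by rw [hDD]
    rw [diagonal_mul_diagonal] at h1
    simp only [diagonal_apply_eq, Pi.mul_apply, hfdef, Function.comp_apply] at h1
    exact_mod_cast h1
  rw [hherm.rank_eq_card_non_zero_eigs] at hrank
  obtain ⟨a, ha⟩ := Fintype.card_eq_one_iff.mp hrank
  obtain ⟨j, hj⟩ := a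
  have hμj : hherm.eigenvalues j = 1 := by
    rcases mul_eq_mul_left_iff.mp
        (by rw [hidem j, mul_one] : hherm.eigenvalues j * hherm.eigenvalues j
          = hherm.eigenvalues j * 1) with h | h
    · exact h
    · exact absurd h hj
  have hμ0 : ∀ b, b ≠ j → hherm.eigenvalues b = 0 := by
    intro b hb
    by_contra hb0
    exact hb (congrArg Subtype.val (ha ⟨b, hb0⟩))
  refine ⟨fun i => U i j, fun i k => ?_⟩
  rw [hspec, Unitary.conjStarAlgAut_apply]
  rw [Matrix.mul_apply]
  rw [Finset.sum_eq_single j]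
  · simp [mul_diagonal, star_apply, hfdef, hμj]
    simp [hUdef, hherm.eigenvectorUnitary_apply]
  · intro b _ hb
    simp [mul_diagonal, hfdef, hμ0 b hb]
  · simp

private lemma rank_one_mul_mul' {n : ℕ} {ρt : Matrix (Fin n) (Fin n) ℂ} {v : Fin n → ℂ}
    (hv : ∀ i k, ρt i k = v i * star (v k)) (M : Matrix (Fin n) (Fin n) ℂ) :
    ρt * M * ρt = (ρt * M).trace • ρt := by
  ext i k
  simp only [Matrix.mul_apply, Matrix.smul_apply, smul_eq_mul, Matrix.trace,
    Matrix.diag_apply, hv, Finset.sum_mul]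
  refine Finset.sum_congr rfl fun a _ => ?_
  refine Finset.sum_congr rfl fun b _ => ?_
  ring


theorem fidelity_witness_general {n N : ℕ} (hN : 0 < N)
    (ρt : Matrix (Fin n) (Fin n) ℂ)
    (hherm : ρt.IsHermitian) (hproj : ρt * ρt = ρt) (hrank : ρt.rank = 1)
    (lam : Fin N → ℝ) (hmono : Monotone lam) (hΔ : 0 < lam ⟨0, hN⟩)
    (P : Fin N → Matrix (Fin n) (Fin n) ℂ) (hP : ∀ l, (P l).PosSemidef)
    (hres : ρt + ∑ l, P l = 1) (horth : ∀ l, (ρt * P l).trace = 0)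
    (W : Matrix (Fin n) (Fin n) ℂ)
    (hW : W = 1 - ((lam ⟨0, hN⟩ : ℂ))⁻¹ • ∑ l, (lam l : ℂ) • P l) :
    ∀ ρp : Matrix (Fin n) (Fin n) ℂ, ρp.PosSemidef → ρp.trace = 1 →
      (((W * ρp).trace = 1 ↔ ρp = ρt) ∧ (W * ρp).trace ≤ (ρt * ρp).trace) := by
  intro ρp hρp htrρp
  have hΔc : (0:ℂ) < (lam ⟨0, hN⟩ : ℂ) := by exact_mod_cast hΔ
  have hΔne : ((lam ⟨0, hN⟩ : ℝ) : ℂ) ≠ 0 := ne_of_gt hΔc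
  obtain ⟨v, hv⟩ := rank_one_proj_exists' hherm hproj hrank
  have key := rank_one_mul_mul' hv
  have hne : ρt ≠ 0 := by
    intro h
    rw [h, Matrix.rank_zero] at hrank
    exact absurd hrank (by norm_num)
  have htrt : ρt.trace = 1 := by
    have h1 := key 1
    rw [mul_one, hproj] at h1
    by_contra hc
    apply hne
    have h2 : (ρt.trace - 1) • ρt = 0 := by
      rw [sub_smul, one_smul, ← h1, sub_self]
    rcases smul_eq_zero.mp h2 with h | h
    · exact absurd (by rwa [sub_eq_zero] at h) hc
    · exact h
  have hsumP : (∑ l, P l) = 1 - ρt := eq_sub_of_add_eq' hres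
  have hlampos : ∀ l : Fin N, 0 < lam l := fun l =>
    lt_of_lt_of_le hΔ (hmono (by simp [Fin.le_def]))
  have hlam : ∀ l : Fin N, (1:ℂ) ≤ (lam ⟨0, hN⟩ : ℂ)⁻¹ * (lam l : ℂ) := by
    intro l
    have h0 : lam ⟨0, hN⟩ ≤ lam l := hmono (by simp [Fin.le_def])
    have h1 : (1:ℝ) ≤ (lam ⟨0, hN⟩)⁻¹ * lam l := (le_inv_mul_iff₀ hΔ).mpr (by linarith)
    calc (1:ℂ) = ((1:ℝ) : ℂ) := by norm_num
    _ ≤ (((lam ⟨0, hN⟩)⁻¹ * lam l : ℝ) : ℂ) := by exact_mod_cast h1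
    _ = (lam ⟨0, hN⟩ : ℂ)⁻¹ * (lam l : ℂ) := by push_cast; ring
  have htl : ∀ l, (0:ℂ) ≤ ((P l) * ρp).trace := fun l => psd_mul_trace_nonneg' (hP l) hρp
  have hWt : (W * ρp).trace
      = 1 - (lam ⟨0, hN⟩ : ℂ)⁻¹ * ∑ l, (lam l : ℂ) * ((P l) * ρp).trace := by
    rw [hW, sub_mul, one_mul, smul_mul_assoc, Finset.sum_mul, trace_sub, trace_smul, htrρp]
    simp only [smul_mul_assoc, trace_sum, trace_smul, smul_eq_mul]
  have hsumtr : ∑ l, ((P l) * ρp).trace = 1 - (ρt * ρp).trace := by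
    calc ∑ l, ((P l) * ρp).trace = ((∑ l, P l) * ρp).trace := by
          rw [Finset.sum_mul, trace_sum]
    _ = ((1 - ρt) * ρp).trace := by rw [hsumP]
    _ = 1 - (ρt * ρp).trace := by rw [sub_mul, one_mul, trace_sub, htrρp]
  have hii : (W * ρp).trace ≤ (ρt * ρp).trace := by
    rw [hWt, show (ρt * ρp).trace = 1 - ∑ l, ((P l) * ρp).trace from by
      rw [hsumtr]; ring]
    refine sub_le_sub_left ?_ 1
    rw [Finset.mul_sum]
    refine Finset.sum_le_sum fun l _ => ?_
    calc ((P l) * ρp).trace = 1 * ((P l) * ρp).trace := (one_mul _).symm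
    _ ≤ ((lam ⟨0, hN⟩ : ℂ)⁻¹ * (lam l : ℂ)) * ((P l) * ρp).trace :=
        mul_le_mul_of_nonneg_right (hlam l) (htl l)
    _ = (lam ⟨0, hN⟩ : ℂ)⁻¹ * ((lam l : ℂ) * ((P l) * ρp).trace) := by ring
  refine ⟨⟨fun h1 => ?_, fun h1 => ?_⟩, hii⟩
  · -- forward
    rw [hWt] at h1
    have hz0 : (lam ⟨0, hN⟩ : ℂ)⁻¹ * ∑ l, (lam l : ℂ) * ((P l) * ρp).trace = 0 := by
      rwa [sub_eq_self] at h1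
    have hz : ∑ l, (lam l : ℂ) * ((P l) * ρp).trace = 0 :=
      (mul_eq_zero.mp hz0).resolve_left (inv_ne_zero hΔne)
    have hzero : ∀ l, ((P l) * ρp).trace = 0 := by
      intro l
      have hnn : ∀ l ∈ Finset.univ, (0:ℂ) ≤ (lam l : ℂ) * ((P l) * ρp).trace := by
        intro l _
        exact mul_nonneg (by exact_mod_cast (hlampos l).le) (htl l)
      have hterm := (Finset.sum_eq_zero_iff_of_nonneg hnn).mp hz l (Finset.mem_univ l)
      have hlne : ((lam l : ℝ) : ℂ) ≠ 0 := by
        exact_mod_cast (hlampos l).ne'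
      exact (mul_eq_zero.mp hterm).resolve_left hlne
    have hfid : (ρt * ρp).trace = 1 := by
      have h2 : (0:ℂ) = 1 - (ρt * ρp).trace := by
        rw [← hsumtr]
        exact (Finset.sum_eq_zero fun l _ => hzero l).symm
      exact (sub_eq_zero.mp h2.symm).symm
    have htr0 : ((1 - ρt) * ρp).trace = 0 := by
      rw [sub_mul, one_mul, trace_sub, htrρp, hfid, sub_self]
    have h1m : (1 - ρt : Matrix (Fin n) (Fin n) ℂ).PosSemidef := by
      rw [← hsumP]
      exact Finset.sum_induction P _ (fun a b ha hb => ha.add hb)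
        Matrix.PosSemidef.zero (fun l _ => hP l)
    have hz2 : (1 - ρt) * ρp = 0 := psd_mul_eq_zero' h1m hρp htr0
    rw [sub_mul, one_mul] at hz2
    have hA1 : ρp = ρt * ρp := sub_eq_zero.mp hz2
    have hA2 : ρp = ρp * ρt := by
      have h5 := congrArg conjTranspose hA1
      rwa [conjTranspose_mul, hρp.isHermitian.eq, hherm.eq] at h5
    have h3 : ρt * ρp * ρt = ρp := by rw [mul_assoc, ← hA2, ← hA1]
    rw [key ρp, hfid, one_smul] at h3
    exact h3.symm
  · subst h1
    rw [hWt]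
    have h0 : ∀ l, ((P l) * ρp).trace = 0 := fun l => by
      rw [trace_mul_comm]; exact horth l
    simp only [h0, mul_zero, Finset.sum_const_zero, sub_zero]
end

section
/- Let ρ_t be a rank-one orthogonal projection on a finite-dimensional complex Hilbert space, let N ∈ ℕ, let λ_1, …, λ_N be real numbers with 0 < Δ := λ_1 ≤ λ_2 ≤ … ≤ λ_N, and let P_1, …, P_N be positive semidefinite operators satisfying ρ_t + Σ_{l=1}^N P_l = 1 and tr(ρ_t P_l) = 0 for all l. Define W := 1 − Δ⁻¹ Σ_{l=1}^N λ_l P_l. Then the operator ρ_t − W is positive semidefinite. -/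
/-!
**Statement 1.**  With the hypotheses of the general fidelity-witness construction
(`ρt` a rank-one orthogonal projection, `0 < Δ = λ 1 ≤ … ≤ λ N`, `P l ⪰ 0`,
`ρt + ∑ l, P l = 1`, `tr(ρt P l) = 0`), the operator `ρt − W` with
`W := 1 − Δ⁻¹ • ∑ l, λ l • P l` is positive semidefinite.
-/

open Matrix
open scoped ComplexOrder

lemma psd_real_smul {n : ℕ} {M : Matrix (Fin n) (Fin n) ℂ} (hM : M.PosSemidef)
    {c : ℝ} (hc : 0 ≤ c) : (((c : ℂ)) • M).PosSemidef := by
  refine Matrix.PosSemidef.of_dotProduct_mulVec_nonneg ?_ ?_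
  · rw [Matrix.IsHermitian, conjTranspose_smul, hM.1, Complex.star_def,
      Complex.conj_ofReal]
  · intro x
    rw [smul_mulVec, dotProduct_smul, smul_eq_mul]
    exact mul_nonneg (by exact_mod_cast hc) (hM.dotProduct_mulVec_nonneg x)

theorem fidelity_witness_loewner_dominated {n N : ℕ} (hN : 0 < N)
    (ρt : Matrix (Fin n) (Fin n) ℂ)
    (hherm : ρt.IsHermitian) (hproj : ρt * ρt = ρt) (hrank : ρt.rank = 1)
    (lam : Fin N → ℝ) (hmono : Monotone lam) (hΔ : 0 < lam ⟨0, hN⟩)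
    (P : Fin N → Matrix (Fin n) (Fin n) ℂ) (hP : ∀ l, (P l).PosSemidef)
    (hres : ρt + ∑ l, P l = 1) (horth : ∀ l, (ρt * P l).trace = 0)
    (W : Matrix (Fin n) (Fin n) ℂ)
    (hW : W = 1 - ((lam ⟨0, hN⟩ : ℂ))⁻¹ • ∑ l, (lam l : ℂ) • P l) :
    (ρt - W).PosSemidef := by
  have hρ : ρt = 1 - ∑ l, P l := by
    rw [← hres]; abel
  have key : ρt - W = ∑ l, ((lam l / lam ⟨0, hN⟩ - 1 : ℝ) : ℂ) • P l := by
    rw [hW, hρ, Finset.smul_sum]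
    have step : (1 - ∑ l, P l) - (1 - ∑ l, ((lam ⟨0, hN⟩ : ℂ))⁻¹ • (lam l : ℂ) • P l)
        = ∑ l, (((lam ⟨0, hN⟩ : ℂ))⁻¹ • (lam l : ℂ) • P l - P l) := by
      rw [Finset.sum_sub_distrib]; abel
    rw [step]
    have : ∀ l : Fin N,
        ((lam ⟨0, hN⟩ : ℂ))⁻¹ • (lam l : ℂ) • P l - P l
          = ((lam l / lam ⟨0, hN⟩ - 1 : ℝ) : ℂ) • P l := by
      intro l
      rw [smul_smul]
      have : (((lam l / lam ⟨0, hN⟩ - 1 : ℝ)) : ℂ)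
          = ((lam ⟨0, hN⟩ : ℂ))⁻¹ * (lam l : ℂ) - 1 := by
        push_cast
        rw [div_eq_inv_mul]
      rw [this, sub_smul, one_smul]
    exact Finset.sum_congr rfl fun l _ => this l
  rw [key]
  refine Finset.sum_induction _ _ (fun a b ha hb => ha.add hb)
    Matrix.PosSemidef.zero fun l _ => ?_
  apply psd_real_smul (hP l)
  have hle : lam ⟨0, hN⟩ ≤ lam l := hmono (by simp [Fin.le_def])
  have := (one_le_div hΔ).mpr hle
  linarith
end

section
/- Work on the L-qubit space (ℂ²)^{⊗L} with computational basis {|ν⟩ : ν ∈ {0,1}^L}. Fix ω ∈ {0,1}^L and define the diagonal operator N^{(ω)} := Σ_{ν ∈ {0,1}^L} d(ν, ω) |ν⟩⟨ν|, where d(ν, ω) is the Hamming distance (the number of positions k with ν_k ≠ ω_k). Let U be any unitary on (ℂ²)^{⊗L}, and set ρ_t := U |ω⟩⟨ω| U† and W := U (1 − N^{(ω)}) U†. Then: (i) ρ_t − W is positive semidefinite; (ii) for every density matrix ρ_p, tr(W ρ_p) ≤ tr(ρ_t ρ_p); and (iii) tr(W ρ_p) = 1 if and only if ρ_p = ρ_t.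 -/
/-!
**Statement 2** (Free-fermionic / qubit fidelity witness).

On the `L`-qubit space `(ℂ²)^{⊗L}` (matrices indexed by `Fin L → Fin 2`), fix
`ω ∈ {0,1}^L` and let `N^{(ω)} := ∑_ν d(ν,ω) |ν⟩⟨ν|` be the diagonal operator whose
diagonal entries are the Hamming distances to `ω`.  For a unitary `U`, set
`ρt := U |ω⟩⟨ω| U†` and `W := U (1 − N^{(ω)}) U†`.  Then `ρt − W ⪰ 0`, and for every
density matrix `ρp` we have `tr(W ρp) ≤ tr(ρt ρp)` and `tr(W ρp) = 1 ↔ ρp = ρt`.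
-/

open Matrix
open scoped ComplexOrder

private lemma psd_diag_nonneg' {n : Type*} [Fintype n] [DecidableEq n] {M : Matrix n n ℂ}
    (hM : M.PosSemidef) (ν : n) : 0 ≤ M ν ν := by
  exact hM.diag_nonneg

private lemma psd_trace_nonneg'_s2 {n : Type*} [Fintype n] [DecidableEq n] {M : Matrix n n ℂ}
    (hM : M.PosSemidef) : 0 ≤ M.trace :=
  Finset.sum_nonneg fun ν _ => psd_diag_nonneg' hM ν

private lemma psd_trace_mul_nonneg' {n : Type*} [Fintype n] [DecidableEq n] {A B : Matrix n n ℂ}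
    (hA : A.PosSemidef) (hB : B.PosSemidef) : 0 ≤ (A * B).trace := by
  obtain ⟨C, rfl⟩ : ∃ C : Matrix n n ℂ, B = Cᴴ * C := by
    open scoped MatrixOrder in exact CStarAlgebra.nonneg_iff_eq_star_mul_self.mp hB.nonneg
  rw [← mul_assoc, trace_mul_comm, ← mul_assoc]
  exact psd_trace_nonneg'_s2 (hA.mul_mul_conjTranspose_same C)

private lemma psd_row_col_zero' {n : Type*} [Fintype n] [DecidableEq n] {M : Matrix n n ℂ}
    (hM : M.PosSemidef) {ν : n} (h : M ν ν = 0) (μ : n) : M μ ν = 0 ∧ M ν μ = 0 := by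
  obtain ⟨B, rfl⟩ : ∃ B : Matrix n n ℂ, M = Bᴴ * B := by
    open scoped MatrixOrder in exact CStarAlgebra.nonneg_iff_eq_star_mul_self.mp hM.nonneg
  have hcol : ∀ k, B k ν = 0 := by
    have h' : ∑ k, star (B k ν) * B k ν = 0 := by
      simpa [Matrix.mul_apply, conjTranspose_apply] using h
    intro k
    have := (Finset.sum_eq_zero_iff_of_nonneg
      (fun k _ => star_mul_self_nonneg (B k ν))).mp h' k (Finset.mem_univ k)
    exact (CStarRing.star_mul_self_eq_zero_iff _).mp this
  constructor <;> simp [Matrix.mul_apply, conjTranspose_apply, hcol]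

private lemma conj_trace_mul' {n : Type*} [Fintype n] [DecidableEq n]
    {U : Matrix n n ℂ} (hUl : Uᴴ * U = 1) (X Y : Matrix n n ℂ) :
    (U * X * Uᴴ * (U * Y * Uᴴ)).trace = (X * Y).trace := by
  have h : U * X * Uᴴ * (U * Y * Uᴴ) = U * (X * Y) * Uᴴ := by
    simp only [mul_assoc]
    rw [← mul_assoc Uᴴ U, hUl, one_mul]
  rw [h, trace_mul_comm, ← mul_assoc, hUl, one_mul]

theorem qubit_fidelity_witness {L : ℕ}
    (ω : Fin L → Fin 2)
    (U : Matrix (Fin L → Fin 2) (Fin L → Fin 2) ℂ)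
    (hU : U ∈ Matrix.unitaryGroup (Fin L → Fin 2) ℂ)
    (Nω : Matrix (Fin L → Fin 2) (Fin L → Fin 2) ℂ)
    (hNω : Nω = Matrix.diagonal (fun ν => (hammingDist ν ω : ℂ)))
    (ρt W : Matrix (Fin L → Fin 2) (Fin L → Fin 2) ℂ)
    (hρt : ρt = U * Matrix.single ω ω 1 * Uᴴ)
    (hW : W = U * (1 - Nω) * Uᴴ) :
    (ρt - W).PosSemidef ∧
      ∀ ρp : Matrix (Fin L → Fin 2) (Fin L → Fin 2) ℂ, ρp.PosSemidef → ρp.trace = 1 →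
        ((W * ρp).trace ≤ (ρt * ρp).trace ∧ ((W * ρp).trace = 1 ↔ ρp = ρt)) := by
  have hUl : Uᴴ * U = 1 := hU.1
  have hUr : U * Uᴴ = 1 := hU.2
  have hdiff : ρt - W = U * Matrix.diagonal
      (fun ν => if ν = ω then 0 else ((hammingDist ν ω : ℂ) - 1)) * Uᴴ := by
    rw [hρt, hW, ← sub_mul, ← Matrix.mul_sub]
    congr 2
    ext μ ν
    by_cases hμν : μ = ν
    · subst hμν
      by_cases hμω : μ = ω
      · subst hμω
        simp [hNω, Matrix.single, hammingDist_self, Matrix.one_apply]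
      · have hωμ : ¬ ω = μ := fun h => hμω h.symm
        simp [hNω, Matrix.single, hμω, hωμ, Matrix.one_apply]
    · have hne : ¬(ω = μ ∧ ω = ν) := fun h => hμν (h.1.symm.trans h.2)
      simp [hNω, Matrix.single, hne, Matrix.sub_apply,
        Matrix.diagonal_apply_ne _ hμν, Matrix.one_apply_ne hμν]
  have hDpsd : (Matrix.diagonal
      (fun ν => if ν = ω then 0 else ((hammingDist ν ω : ℂ) - 1))).PosSemidef := by
    refine posSemidef_diagonal_iff.mpr fun ν => ?_
    by_cases hν : ν = ω
    · simp [hν]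
    · have h1 : 1 ≤ hammingDist ν ω := hammingDist_pos.mpr hν
      simp only [hν, if_false]
      rw [sub_nonneg]
      calc (1 : ℂ) = ((1 : ℕ) : ℂ) := by norm_num
        _ ≤ ((hammingDist ν ω : ℕ) : ℂ) := by exact_mod_cast Nat.cast_le.mpr h1
  have hpsd : (ρt - W).PosSemidef := by
    rw [hdiff]; exact hDpsd.mul_mul_conjTranspose_same U
  refine ⟨hpsd, fun ρp hρp hρtr => ?_⟩
  set σ : Matrix (Fin L → Fin 2) (Fin L → Fin 2) ℂ := Uᴴ * ρp * U with hσdef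
  have hσpsd : σ.PosSemidef := hρp.conjTranspose_mul_mul_same U
  have hσtr : σ.trace = 1 := by
    rw [hσdef, trace_mul_comm, ← mul_assoc, hUr, one_mul, hρtr]
  have hρpσ : ρp = U * σ * Uᴴ := by
    rw [hσdef]
    simp only [← mul_assoc]
    rw [hUr, one_mul, mul_assoc, hUr, mul_one]
  have htrW : (W * ρp).trace = 1 - ∑ ν, (hammingDist ν ω : ℂ) * σ ν ν := by
    rw [hW, hρpσ, conj_trace_mul' hUl, sub_mul, one_mul, trace_sub, hσtr, hNω]
    congr 1
    simp [Matrix.trace, Matrix.diag, diagonal_mul]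
  have htrρt : (ρt * ρp).trace = σ ω ω := by
    rw [hρt, hρpσ, conj_trace_mul' hUl, Matrix.trace]
    rw [Finset.sum_eq_single ω]
    · simp [Matrix.diag, Matrix.single_mul_apply_same]
    · intro b _ hb
      have hb' : ¬ ω = b := fun h => hb h.symm
      simp [Matrix.diag, Matrix.mul_apply, Matrix.single, hb']
    · simp
  constructor
  · have h0 : 0 ≤ ((ρt - W) * ρp).trace := psd_trace_mul_nonneg' hpsd hρp
    rw [sub_mul, trace_sub] at h0
    exact sub_nonneg.mp h0
  constructor
  · intro h1
    rw [htrW] at h1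
    have hsum : ∑ ν, (hammingDist ν ω : ℂ) * σ ν ν = 0 := sub_eq_self.mp h1
    have hterm : ∀ ν, ν ≠ ω → σ ν ν = 0 := by
      intro ν hν
      have hnn : ∀ ν ∈ Finset.univ, 0 ≤ (hammingDist ν ω : ℂ) * σ ν ν := fun ν _ =>
        mul_nonneg (by positivity) (psd_diag_nonneg' hσpsd ν)
      have := (Finset.sum_eq_zero_iff_of_nonneg hnn).mp hsum ν (Finset.mem_univ ν)
      have hd : (hammingDist ν ω : ℂ) ≠ 0 :=
        Nat.cast_ne_zero.mpr (hammingDist_pos.mpr hν).ne'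
      exact (mul_eq_zero.mp this).resolve_left hd
    have hσeq : σ = Matrix.single ω ω 1 := by
      have hσωω : σ ω ω = 1 := by
        rw [Matrix.trace] at hσtr
        rw [← hσtr]
        exact (Finset.sum_eq_single ω (fun b _ hb => hterm b hb) (by simp)).symm
      ext μ ν
      by_cases hμ : μ = ω <;> by_cases hν : ν = ω
      · rw [hμ, hν]; simp [Matrix.single, hσωω]
      · have h0 := (psd_row_col_zero' hσpsd (hterm ν hν) ω).1
        have hν' : ¬ ω = ν := fun h => hν h.symm
        rw [hμ, h0]
        simp [Matrix.single, hν']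
      · have h0 := (psd_row_col_zero' hσpsd (hterm μ hμ) ω).2
        have hμ' : ¬ ω = μ := fun h => hμ h.symm
        rw [hν, h0]
        simp [Matrix.single, hμ']
      · have h0 := (psd_row_col_zero' hσpsd (hterm ν hν) μ).1
        have hν' : ¬ ω = ν := fun h => hν h.symm
        rw [h0]
        simp [Matrix.single, hν']
    rw [hρpσ, hσeq, hρt]
  · intro h1
    have hσeq : σ = Matrix.single ω ω 1 := by
      rw [hσdef, h1, hρt]
      simp only [← mul_assoc]
      rw [hUl, one_mul, mul_assoc, hUl, mul_one]
    rw [htrW, hσeq]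
    have hz : ∀ ν, (hammingDist ν ω : ℂ) *
        (Matrix.single ω ω 1 : Matrix _ _ ℂ) ν ν = 0 := by
      intro ν
      by_cases hν : ν = ω
      · subst hν; simp [hammingDist_self]
      · have hων : ¬ ω = ν := fun h => hν h.symm
        simp [Matrix.single, hων]
    simp [hz]
end

section
/- Let m_1, …, m_{2L} be a Majorana representation by n×n complex matrices, let A ∈ ℝ^{2L×2L} be antisymmetric, and let H(A) := (i/4) Σ_{j,k=1}^{2L} A_{j,k} m_j m_k. Then for every t ∈ ℝ and every j = 1, …, 2L, exp(i t H(A)) · m_j · exp(−i t H(A)) = Σ_{k=1}^{2L} (exp(t A))_{j,k} m_k, where exp(t A) is the matrix exponential of the real matrix t A (its entries cast into ℂ). -/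
/-!
**Statement 4** (Free-fermion propagator / Heisenberg evolution of Majorana operators).

With a Majorana representation `m` by `n×n` matrices, `A ∈ ℝ^{2L×2L}` antisymmetric, and
`H(A) := (i/4) ∑_{j,k} A_{jk} m_j m_k`, for every `t ∈ ℝ` and every `j`,
`exp(itH) m_j exp(−itH) = ∑_k (exp(tA))_{jk} m_k`, the matrix exponential `exp(tA)` being
taken over `ℝ` and its entries cast into `ℂ`.
-/

open Matrix NormedSpace

section aux

variable {E : Type*} [NormedRing E] [NormedAlgebra ℂ E] [CompleteSpace E]

theorem clm_exp_apply (T : E →L[ℂ] E) (X : E) :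
    exp T X = ∑' p : ℕ, (p.factorial : ℂ)⁻¹ • (T ^ p) X := by
  have h := (ContinuousLinearMap.apply ℂ E X).map_tsum
    (NormedSpace.expSeries_summable' (𝕂 := ℂ) T)
  simp only [ContinuousLinearMap.apply_apply] at h
  rw [exp_eq_tsum ℂ]
  beta_reduce
  rw [h]
  exact tsum_congr fun p => by simp

theorem conj_exp_eq (B X : E) :
    exp (ContinuousLinearMap.mul ℂ E B - (ContinuousLinearMap.mul ℂ E).flip B) X
      = exp B * X * exp (-B) := by
  set Lb := ContinuousLinearMap.mul ℂ E B with hLb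
  set Rb := (ContinuousLinearMap.mul ℂ E).flip B with hRb
  have hcomm : Commute Lb (-Rb) := by
    apply Commute.neg_right
    ext Y
    simp [Lb, Rb, mul_assoc]
  have hsplit : exp (Lb - Rb) = exp Lb * exp (-Rb) := by
    rw [sub_eq_add_neg]
    exact exp_add_of_commute_of_mem_ball (𝕂 := ℂ) hcomm
      ((expSeries_radius_eq_top ℂ (E →L[ℂ] E)).symm ▸ edist_lt_top _ _)
      ((expSeries_radius_eq_top ℂ (E →L[ℂ] E)).symm ▸ edist_lt_top _ _)
  have hLpow : ∀ (p : ℕ) (Y : E), (Lb ^ p) Y = B ^ p * Y := by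
    intro p
    induction p with
    | zero => simp
    | succ q ih => intro Y; rw [pow_succ', pow_succ']; simp [ih, Lb, mul_assoc]
  have hRpow : ∀ (p : ℕ) (Y : E), ((-Rb) ^ p) Y = Y * (-B) ^ p := by
    intro p
    induction p with
    | zero => simp
    | succ q ih => intro Y; rw [pow_succ', pow_succ]; simp [ih, Rb, mul_assoc]
  have hR : exp (-Rb) X = X * exp (-B) := by
    have h1 := (ContinuousLinearMap.mul ℂ E X).map_tsum
      (NormedSpace.expSeries_summable' (𝕂 := ℂ) (-B))
    simp only [ContinuousLinearMap.mul_apply'] at h1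
    rw [clm_exp_apply, exp_eq_tsum ℂ]
    beta_reduce
    rw [h1]
    exact tsum_congr fun p => by simp [hRpow, mul_smul_comm]
  have hL : ∀ Y, exp Lb Y = exp B * Y := by
    intro Y
    have h1 := ((ContinuousLinearMap.mul ℂ E).flip Y).map_tsum
      (NormedSpace.expSeries_summable' (𝕂 := ℂ) B)
    simp only [ContinuousLinearMap.flip_apply, ContinuousLinearMap.mul_apply'] at h1
    rw [clm_exp_apply, exp_eq_tsum ℂ]
    beta_reduce
    rw [h1]
    exact tsum_congr fun p => by simp [hLpow, smul_mul_assoc]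
  rw [hsplit, ContinuousLinearMap.mul_apply, hR, hL, mul_assoc]

end aux

theorem majorana_comm {L n : ℕ}
    (m : Fin (2 * L) → Matrix (Fin n) (Fin n) ℂ)
    (hcar : ∀ j k, m j * m k + m k * m j = if j = k then (2 : ℂ) • 1 else 0)
    (A : Matrix (Fin (2 * L)) (Fin (2 * L)) ℝ) (hA : Aᵀ = -A)
    (H : Matrix (Fin n) (Fin n) ℂ)
    (hH : H = (Complex.I / 4) • ∑ j, ∑ k, (A j k : ℂ) • (m j * m k)) (l : Fin (2 * L)) :
    H * m l - m l * H = ∑ k, (-Complex.I * (A l k : ℂ)) • m k := by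
  have hA' : ∀ a b, A a b = -A b a := by
    intro a b
    have := congrFun (congrFun hA b) a
    simpa using this
  have key : ∀ j k, m j * m k * m l - m l * (m j * m k)
      = (if k = l then (2:ℂ) else 0) • m j - (if j = l then (2:ℂ) else 0) • m k := by
    intro j k
    have h1 := hcar k l
    have h2 := hcar j l
    have e : m j * m k * m l - m l * (m j * m k)
        = m j * (m k * m l + m l * m k) - (m j * m l + m l * m j) * m k := by noncomm_ring
    rw [e, h1, h2]
    split_ifs <;> simp [mul_smul_comm, smul_mul_assoc]
  have step1 : H * m l - m l * H = (Complex.I/4) • ∑ j, ∑ k, (A j k : ℂ) •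
      ((if k = l then (2:ℂ) else 0) • m j - (if j = l then (2:ℂ) else 0) • m k) := by
    rw [hH, smul_mul_assoc, mul_smul_comm, ← smul_sub, Finset.sum_mul, Finset.mul_sum,
      ← Finset.sum_sub_distrib]
    congr 1
    refine Finset.sum_congr rfl fun j _ => ?_
    rw [Finset.sum_mul, Finset.mul_sum, ← Finset.sum_sub_distrib]
    refine Finset.sum_congr rfl fun k _ => ?_
    rw [smul_mul_assoc, mul_smul_comm, ← smul_sub, key]
  rw [step1]
  simp only [smul_sub, smul_smul, Finset.sum_sub_distrib, mul_ite, mul_zero, mul_one,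
    ite_smul, zero_smul, smul_ite, smul_zero, Finset.sum_ite_eq', Finset.sum_ite_eq,
    Finset.mem_univ, if_true, Finset.sum_ite_irrel, Finset.sum_const_zero]
  rw [Finset.smul_sum, Finset.smul_sum, ← Finset.sum_sub_distrib]
  refine Finset.sum_congr rfl fun k _ => ?_
  rw [smul_smul, smul_smul, ← sub_smul, hA' k l]
  congr 1
  push_cast
  ring

theorem majorana_heisenberg_evolution {L n : ℕ}
    (m : Fin (2 * L) → Matrix (Fin n) (Fin n) ℂ)
    (hsa : ∀ j, (m j)ᴴ = m j)
    (hcar : ∀ j k, m j * m k + m k * m j = if j = k then (2 : ℂ) • 1 else 0)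
    (A : Matrix (Fin (2 * L)) (Fin (2 * L)) ℝ) (hA : Aᵀ = -A)
    (H : Matrix (Fin n) (Fin n) ℂ)
    (hH : H = (Complex.I / 4) • ∑ j, ∑ k, (A j k : ℂ) • (m j * m k)) (t : ℝ) :
    ∀ j, exp ((Complex.I * (t : ℂ)) • H) * m j * exp ((-(Complex.I * (t : ℂ))) • H)
      = ∑ k, ((exp (t • A) j k : ℝ) : ℂ) • m k := by
  intro j
  letI : SeminormedRing (Matrix (Fin n) (Fin n) ℂ) := Matrix.linftyOpSemiNormedRing
  letI : NormedRing (Matrix (Fin n) (Fin n) ℂ) := Matrix.linftyOpNormedRing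
  letI : NormedAlgebra ℂ (Matrix (Fin n) (Fin n) ℂ) := Matrix.linftyOpNormedAlgebra
  letI : SeminormedRing (Matrix (Fin (2*L)) (Fin (2*L)) ℝ) := Matrix.linftyOpSemiNormedRing
  letI : NormedRing (Matrix (Fin (2*L)) (Fin (2*L)) ℝ) := Matrix.linftyOpNormedRing
  letI : NormedAlgebra ℝ (Matrix (Fin (2*L)) (Fin (2*L)) ℝ) := Matrix.linftyOpNormedAlgebra
  letI : SeminormedRing (Matrix (Fin (2*L)) (Fin (2*L)) ℂ) := Matrix.linftyOpSemiNormedRing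
  letI : NormedRing (Matrix (Fin (2*L)) (Fin (2*L)) ℂ) := Matrix.linftyOpNormedRing
  letI : NormedAlgebra ℝ (Matrix (Fin (2*L)) (Fin (2*L)) ℂ) := Matrix.linftyOpNormedAlgebra
  letI : NormedAlgebra ℂ (Matrix (Fin (2*L)) (Fin (2*L)) ℂ) := Matrix.linftyOpNormedAlgebra
  letI : TopologicalSpace (Matrix (Fin n) (Fin n) ℂ) := UniformSpace.toTopologicalSpace
  letI : TopologicalSpace (Matrix (Fin (2*L)) (Fin (2*L)) ℝ) := UniformSpace.toTopologicalSpace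
  letI : TopologicalSpace (Matrix (Fin (2*L)) (Fin (2*L)) ℂ) := UniformSpace.toTopologicalSpace
  set B : Matrix (Fin n) (Fin n) ℂ := (Complex.I * (t : ℂ)) • H with hB
  set ψ : Matrix (Fin (2*L)) (Fin (2*L)) ℝ →ₐ[ℝ] Matrix (Fin (2*L)) (Fin (2*L)) ℂ :=
    (Complex.ofRealAm).mapMatrix with hψ
  set A' : Matrix (Fin (2*L)) (Fin (2*L)) ℂ := ψ (t • A) with hA'def
  have hA'entry : ∀ a b, A' a b = ((t * A a b : ℝ) : ℂ) := by
    intro a b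
    simp [hA'def, hψ, AlgHom.mapMatrix_apply, Matrix.map_apply, Matrix.smul_apply]
  -- the commutator with B
  have hcomm : ∀ l, B * m l - m l * B = ∑ k, A' l k • m k := by
    intro l
    have h0 := majorana_comm m hcar A hA H hH l
    calc B * m l - m l * B = (Complex.I * (t : ℂ)) • (H * m l - m l * H) := by
          rw [hB, smul_mul_assoc, mul_smul_comm, smul_sub]
      _ = ∑ k, A' l k • m k := by
          rw [h0, Finset.smul_sum]
          refine Finset.sum_congr rfl fun k _ => ?_
          rw [smul_smul, hA'entry]
          congr 1
          push_cast
          ring_nf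
          rw [Complex.I_sq]
          ring
  set D :=
    ContinuousLinearMap.mul ℂ (Matrix (Fin n) (Fin n) ℂ) B
      - (ContinuousLinearMap.mul ℂ (Matrix (Fin n) (Fin n) ℂ)).flip B with hD
  have hDapp : ∀ l, D (m l) = ∑ k, A' l k • m k := by
    intro l
    exact hcomm l
  have hpow : ∀ p : ℕ, (D ^ p) (m j) = ∑ k, (A' ^ p) j k • m k := by
    intro p
    induction p with
    | zero => simp [Matrix.one_apply, ite_smul, Finset.sum_ite_eq, Finset.mem_univ]
    | succ q ih =>
        rw [pow_succ']
        rw [ContinuousLinearMap.mul_apply, ih, map_sum]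
        simp_rw [_root_.map_smul, hDapp, Finset.smul_sum, smul_smul]
        rw [Finset.sum_comm]
        refine Finset.sum_congr rfl fun r _ => ?_
        rw [← Finset.sum_smul, pow_succ, Matrix.mul_apply]
  -- identify exp D (m j)
  have hsummable : Summable (fun p : ℕ => ((p.factorial : ℂ))⁻¹ • A' ^ p) :=
    NormedSpace.expSeries_summable' (𝕂 := ℂ) A'
  have hexpD : exp D (m j) = ∑ k, exp A' j k • m k := by
    rw [clm_exp_apply]
    have hterm : ∀ p : ℕ, ((p.factorial : ℂ))⁻¹ • (D ^ p) (m j)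
        = ∑ k, ((((p.factorial : ℂ))⁻¹ • A' ^ p) j k) • m k := by
      intro p
      rw [hpow, Finset.smul_sum]
      refine Finset.sum_congr rfl fun k _ => ?_
      rw [smul_smul, Matrix.smul_apply, smul_eq_mul]
    refine (tsum_congr hterm).trans ?_
    have hφ : ∀ (k : Fin (2*L)) (M : Matrix (Fin (2*L)) (Fin (2*L)) ℂ),
        (LinearMap.toContinuousLinearMap
          ((Matrix.entryLinearMap ℂ ℂ j k).smulRight (m k))) M = (M j k) • m k :=
      fun k M => rfl
    have hsum : ∀ k : Fin (2*L), Summable (fun p : ℕ =>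
        ((((p.factorial : ℂ))⁻¹ • A' ^ p) j k) • m k) := by
      intro k
      have h2 := hsummable.map
        (LinearMap.toContinuousLinearMap ((Matrix.entryLinearMap ℂ ℂ j k).smulRight (m k)))
        (LinearMap.toContinuousLinearMap
          ((Matrix.entryLinearMap ℂ ℂ j k).smulRight (m k))).continuous
      exact h2
    rw [Summable.tsum_finsetSum (fun k _ => hsum k)]
    refine Finset.sum_congr rfl fun k _ => ?_
    have h3 := ((LinearMap.toContinuousLinearMap
      ((Matrix.entryLinearMap ℂ ℂ j k).smulRight (m k))).map_tsum hsummable).symm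
    simp only [hφ] at h3
    rw [h3, exp_eq_tsum ℂ]
  -- identify exp A'
  have hexpA' : exp A' = ψ (exp (t • A)) := by
    have hcont : Continuous ψ := by
      simp only [hψ]
      show Continuous fun M : Matrix (Fin (2*L)) (Fin (2*L)) ℝ => M.map Complex.ofRealAm
      exact Continuous.matrix_map continuous_id Complex.continuous_ofReal
    refine Eq.trans ?_ (map_exp_of_mem_ball (𝕂 := ℝ) ψ hcont (t • A)
      ((expSeries_radius_eq_top ℝ (Matrix (Fin (2*L)) (Fin (2*L)) ℝ)).symm ▸ edist_lt_top _ _)).symm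
    rfl
  -- final assembly
  have hneg : (-(Complex.I * (t : ℂ))) • H = -B := by rw [hB, neg_smul]
  rw [hneg]
  show exp B * m j * exp (-B) = ∑ k, ((exp (t • A) j k : ℝ) : ℂ) • m k
  have := conj_exp_eq B (m j)
  rw [← hD] at this
  refine this.symm.trans (hexpD.trans ?_)
  rw [hexpA']
  refine Finset.sum_congr rfl fun k _ => ?_
  congr 1
end

section
/- Let m_1, …, m_{2L} be a Majorana representation by n×n complex matrices, let A ∈ ℝ^{2L×2L} be antisymmetric, let H(A) := (i/4) Σ_{j,k=1}^{2L} A_{j,k} m_j m_k, and let ρ be an n×n density matrix. Then for every t ∈ ℝ, with U := exp(−i t H(A)) and Q := exp(t A), the covariance matrix evolves as M(U ρ U†) = Q · M(ρ) · Qᵀ. -/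
/-!
**Statement 6** (Evolution of the covariance matrix under Gaussian unitaries).

With a Majorana representation `m` by `n×n` matrices, an antisymmetric `A ∈ ℝ^{2L×2L}`,
`H(A) := (i/4) ∑_{j,k} A_{jk} m_j m_k`, and a density matrix `ρ`, for every `t ∈ ℝ`,
setting `U := exp(−itH)` and `Q := exp(tA)`, the covariance matrix
`M(ρ)_{jk} := (i/2) tr([m_j, m_k] ρ)` evolves as `M(U ρ U†) = Q M(ρ) Qᵀ`.
-/

open Matrix NormedSpace
open scoped ComplexOrder

section AuxiliaryLemmas

variable {𝔸 : Type*} [NormedRing 𝔸] [NormedAlgebra ℂ 𝔸] [CompleteSpace 𝔸]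
variable {ι : Type*} [Fintype ι] [DecidableEq ι]

/-- If `[X, v l] = ∑ k, B l k • v k`, then `e^X v_l e^{-X} = ∑ k (e^B)_{lk} v_k`. -/
theorem conj_exp_of_bracket (X : 𝔸) (v : ι → 𝔸) (B : Matrix ι ι ℂ)
    (h : ∀ l, X * v l - v l * X = ∑ k, B l k • v k) (l : ι) :
    exp X * v l * exp (-X) = ∑ k, (exp B) l k • v k := by
  classical
  letI : NormedAlgebra ℚ 𝔸 := NormedAlgebra.restrictScalars ℚ ℂ 𝔸
  set D : Matrix ι ι 𝔸 := Matrix.diagonal (fun _ => X) with hD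
  set B' : Matrix ι ι 𝔸 := B.map (algebraMap ℂ 𝔸) with hB'
  set V : Matrix ι ι 𝔸 := Matrix.of (fun i _ => v i) with hV
  -- basic relation
  have hMV : (D - B') * V = V * D := by
    ext i j
    simp only [Matrix.mul_apply, Matrix.sub_apply, hD, hV, hB', Matrix.diagonal_apply,
      Matrix.map_apply, Matrix.of_apply, ite_mul, mul_ite, zero_mul, mul_zero, sub_mul,
      Finset.sum_sub_distrib, Finset.sum_ite_eq, Finset.sum_ite_eq', Finset.mem_univ, if_true,
      ← Algebra.smul_def]
    rw [← h i]
    abel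
  have hcomm : Commute D B' := by
    show D * B' = B' * D
    ext i j
    simp only [Matrix.mul_apply, hD, hB', Matrix.diagonal_apply, Matrix.map_apply, ite_mul,
      mul_ite, zero_mul, mul_zero, Finset.sum_ite_eq, Finset.sum_ite_eq', Finset.mem_univ,
      if_true]
    exact (Algebra.commutes (B i j) X).symm
  -- powers
  have hpow : ∀ p : ℕ, (D - B') ^ p * V = V * D ^ p := by
    intro p
    induction p with
    | zero => simp
    | succ p ih =>
      rw [pow_succ, pow_succ, mul_assoc _ _ V, hMV, ← mul_assoc, ih, mul_assoc]
  -- exp identity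
  have hexp : exp (D - B') * V = V * exp D := by
    letI : SeminormedRing (Matrix ι ι 𝔸) := Matrix.linftyOpSemiNormedRing
    letI : NormedRing (Matrix ι ι 𝔸) := Matrix.linftyOpNormedRing
    letI : NormedAlgebra ℂ (Matrix ι ι 𝔸) := Matrix.linftyOpNormedAlgebra
    have : @CompleteSpace (Matrix ι ι 𝔸) (PseudoMetricSpace.toUniformSpace) :=
      inferInstanceAs (CompleteSpace (ι → ι → 𝔸))
    rw [exp_eq_tsum ℂ]
    beta_reduce
    erw [← (expSeries_summable' (𝕂 := ℂ) (D - B')).tsum_mul_right V]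
    erw [← (expSeries_summable' (𝕂 := ℂ) D).tsum_mul_left V]
    congr 1
    funext p
    rw [smul_mul_assoc, hpow, mul_smul_comm]
  have hBD : exp (D - B') = exp (-B') * exp D := by
    rw [sub_eq_neg_add, Matrix.exp_add_of_commute _ _ (hcomm.neg_right.symm)]
  have hBB : exp B' * exp (-B') = 1 := by
    rw [← Matrix.exp_add_of_commute _ _ (Commute.neg_right (Commute.refl B')), add_neg_cancel,
      exp_zero]
  have hDD : exp D * exp (-D) = 1 := by
    rw [← Matrix.exp_add_of_commute _ _ (Commute.neg_right (Commute.refl D)), add_neg_cancel,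
      exp_zero]
  have main : exp D * V * exp (-D) = exp B' * V := by
    have h1 : exp D * V = exp B' * V * exp D := by
      calc exp D * V = exp B' * (exp (-B') * exp D * V) := by
            rw [← mul_assoc, ← mul_assoc, hBB, one_mul]
        _ = exp B' * (exp (D - B') * V) := by rw [hBD]
        _ = exp B' * (V * exp D) := by rw [hexp]
        _ = exp B' * V * exp D := by rw [mul_assoc]
    rw [h1, mul_assoc, hDD, mul_one]
  -- extract entries
  have hDexp : exp D = Matrix.diagonal (fun _ => exp X) := by
    rw [hD, Matrix.exp_diagonal, Pi.exp_def]
  have hDexp' : exp (-D) = Matrix.diagonal (fun _ => exp (-X)) := by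
    have : -D = Matrix.diagonal (fun _ : ι => -X) := by
      rw [hD, Matrix.diagonal_neg]
    rw [this, Matrix.exp_diagonal, Pi.exp_def]
  have hBexp : exp B' = (exp B).map (algebraMap ℂ 𝔸) := by
    letI : SeminormedRing (Matrix ι ι 𝔸) := Matrix.linftyOpSemiNormedRing
    letI : NormedRing (Matrix ι ι 𝔸) := Matrix.linftyOpNormedRing
    letI : NormedAlgebra ℂ (Matrix ι ι 𝔸) := Matrix.linftyOpNormedAlgebra
    letI : SeminormedRing (Matrix ι ι ℂ) := Matrix.linftyOpSemiNormedRing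
    letI : NormedRing (Matrix ι ι ℂ) := Matrix.linftyOpNormedRing
    letI : NormedAlgebra ℂ (Matrix ι ι ℂ) := Matrix.linftyOpNormedAlgebra
    letI : NormedAlgebra ℚ (Matrix ι ι ℂ) := Matrix.linftyOpNormedAlgebra
    have hcont : Continuous fun M : Matrix ι ι ℂ => ((Algebra.ofId ℂ 𝔸).mapMatrix M : Matrix ι ι 𝔸) := by
      simp only [AlgHom.mapMatrix_apply]
      exact Continuous.matrix_map continuous_id (continuous_algebraMap ℂ 𝔸)
    have h2 := map_exp ((Algebra.ofId ℂ 𝔸).mapMatrix : Matrix ι ι ℂ →ₐ[ℂ] Matrix ι ι 𝔸) hcont B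
    simp only [AlgHom.mapMatrix_apply] at h2
    have hco : ⇑(Algebra.ofId ℂ 𝔸) = ⇑(algebraMap ℂ 𝔸) := rfl
    rw [hco] at h2
    rw [hB']; exact h2.symm
  have := congr_fun (congr_fun main l) l
  simp only [hDexp, hDexp', hBexp, hV, Matrix.mul_apply, Matrix.diagonal_apply, Matrix.of_apply,
    Matrix.map_apply, ite_mul, mul_ite, zero_mul, mul_zero, Finset.sum_ite_eq, Finset.sum_ite_eq',
    Finset.mem_univ, if_true, ← Algebra.smul_def] at this
  exact this
/-- commutator of a quadratic term with a Majorana operator -/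
lemma triple_bracket {n : ℕ} {ι : Type*} [DecidableEq ι] (m : ι → Matrix (Fin n) (Fin n) ℂ)
    (hcar : ∀ j k, m j * m k + m k * m j = if j = k then (2 : ℂ) • 1 else 0)
    (j k l : ι) :
    m j * m k * m l - m l * (m j * m k)
      = (if k = l then (2:ℂ) • m j else 0) - (if j = l then (2:ℂ) • m k else 0) := by
  have e1 : m k * m l = (if k = l then (2:ℂ) • (1 : Matrix (Fin n) (Fin n) ℂ) else 0) - m l * m k :=
    eq_sub_of_add_eq (hcar k l)
  have e2 : m j * m l = (if j = l then (2:ℂ) • (1 : Matrix (Fin n) (Fin n) ℂ) else 0) - m l * m j :=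
    eq_sub_of_add_eq (hcar j l)
  calc m j * m k * m l - m l * (m j * m k)
      = m j * (m k * m l) - m l * m j * m k := by simp only [mul_assoc]
    _ = m j * ((if k = l then (2:ℂ) • (1 : Matrix (Fin n) (Fin n) ℂ) else 0) - m l * m k)
          - m l * m j * m k := by rw [e1]
    _ = m j * (if k = l then (2:ℂ) • (1 : Matrix (Fin n) (Fin n) ℂ) else 0)
          - (m j * m l) * m k - m l * m j * m k := by simp only [mul_sub, mul_assoc]
    _ = m j * (if k = l then (2:ℂ) • (1 : Matrix (Fin n) (Fin n) ℂ) else 0)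
          - ((if j = l then (2:ℂ) • (1 : Matrix (Fin n) (Fin n) ℂ) else 0) - m l * m j) * m k
          - m l * m j * m k := by rw [e2]
    _ = (if k = l then (2:ℂ) • m j else 0) - (if j = l then (2:ℂ) • m k else 0) := by
        simp only [sub_mul, mul_ite, ite_mul, mul_zero, zero_mul, mul_one, one_mul,
          smul_mul_assoc, mul_smul_comm]
        abel

lemma H_bracket {n : ℕ} {ι : Type*} [Fintype ι] [DecidableEq ι]
    (m : ι → Matrix (Fin n) (Fin n) ℂ)
    (hcar : ∀ j k, m j * m k + m k * m j = if j = k then (2 : ℂ) • 1 else 0)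
    (A : Matrix ι ι ℝ) (hA : Aᵀ = -A)
    (H : Matrix (Fin n) (Fin n) ℂ)
    (hH : H = (Complex.I / 4) • ∑ j, ∑ k, (A j k : ℂ) • (m j * m k)) (l : ι) :
    H * m l - m l * H = ∑ k, (-Complex.I * (A l k : ℂ)) • m k := by
  have hA' : ∀ a b, (A a b : ℂ) = -(A b a : ℂ) := by
    intro a b
    have := congr_fun (congr_fun hA b) a
    simp only [Matrix.transpose_apply, Matrix.neg_apply] at this
    rw [this]; push_cast; ring
  rw [hH]
  rw [smul_mul_assoc, mul_smul_comm, ← smul_sub]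
  have hS : (∑ j, ∑ k, (A j k : ℂ) • (m j * m k)) * m l
        - m l * ∑ j, ∑ k, (A j k : ℂ) • (m j * m k)
      = ∑ j, ∑ k, (A j k : ℂ) • (m j * m k * m l - m l * (m j * m k)) := by
    simp only [Finset.sum_mul, Finset.mul_sum, smul_mul_assoc, mul_smul_comm, ← Finset.sum_sub_distrib,
      ← smul_sub]
  rw [hS]
  have : ∀ j k, (A j k : ℂ) • (m j * m k * m l - m l * (m j * m k))
      = (if k = l then (A j k : ℂ) • ((2:ℂ) • m j) else 0)
        - (if j = l then (A j k : ℂ) • ((2:ℂ) • m k) else 0) := by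
    intro j k
    rw [triple_bracket m hcar j k l, smul_sub]
    congr 1 <;> split <;> simp
  have h2 : ∀ j : ι, (∑ k, if j = l then (A j k : ℂ) • ((2:ℂ) • m k) else 0)
      = if j = l then ∑ k, (A j k : ℂ) • ((2:ℂ) • m k) else 0 := by
    intro j; split <;> simp
  simp only [this, Finset.sum_sub_distrib, h2, Finset.sum_ite_eq', Finset.mem_univ, if_true]
  rw [← Finset.sum_sub_distrib, Finset.smul_sum]
  apply Finset.sum_congr rfl
  intro x _
  rw [hA' x l]
  module

end AuxiliaryLemmas

/-- The (real) covariance matrix of a state `ρ` with respect to a family of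
Majorana operators `m`:  `M(ρ)_{jk} = (i/2) tr([m_j, m_k] ρ)`. -/
noncomputable def covarianceMatrix {ι : Type*} [Fintype ι] {n : ℕ}
    (m : ι → Matrix (Fin n) (Fin n) ℂ) (ρ : Matrix (Fin n) (Fin n) ℂ) :
    Matrix ι ι ℝ :=
  fun j k => (Complex.I / 2 * ((m j * m k - m k * m j) * ρ).trace).re

theorem covariance_matrix_evolution {L n : ℕ}
    (m : Fin (2 * L) → Matrix (Fin n) (Fin n) ℂ)
    (hsa : ∀ j, (m j)ᴴ = m j)
    (hcar : ∀ j k, m j * m k + m k * m j = if j = k then (2 : ℂ) • 1 else 0)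
    (A : Matrix (Fin (2 * L)) (Fin (2 * L)) ℝ) (hA : Aᵀ = -A)
    (H : Matrix (Fin n) (Fin n) ℂ)
    (hH : H = (Complex.I / 4) • ∑ j, ∑ k, (A j k : ℂ) • (m j * m k))
    (ρ : Matrix (Fin n) (Fin n) ℂ) (hρ : ρ.PosSemidef) (hρtr : ρ.trace = 1)
    (t : ℝ) :
    covarianceMatrix m
        (exp ((-(Complex.I * (t : ℂ))) • H) * ρ * (exp ((-(Complex.I * (t : ℂ))) • H))ᴴ)
      = exp (t • A) * covarianceMatrix m ρ * (exp (t • A))ᵀ := by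
  classical
  set X : Matrix (Fin n) (Fin n) ℂ := (-(Complex.I * (t : ℂ))) • H with hXdef
  set Q : Matrix (Fin (2 * L)) (Fin (2 * L)) ℝ := exp (t • A) with hQdef
  have hHm := H_bracket m hcar A hA H hH
  -- bracket relation for -X
  have hbr : ∀ l, (-X) * m l - m l * (-X)
      = ∑ k, (((t • A).map (Complex.ofReal)) l k) • m k := by
    intro l
    have h0 : (-X) * m l - m l * (-X) = (Complex.I * (t : ℂ)) • (H * m l - m l * H) := by
      rw [hXdef]
      simp only [neg_smul, neg_neg, smul_mul_assoc, mul_smul_comm, smul_sub]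
    rw [h0, hHm l, Finset.smul_sum]
    refine Finset.sum_congr rfl fun a _ => ?_
    rw [smul_smul]
    have hmap : ((t • A).map (Complex.ofReal)) l a = ((t * A l a : ℝ) : ℂ) := by
      simp [Matrix.map_apply, Matrix.smul_apply, smul_eq_mul]
    rw [hmap]
    congr 1
    push_cast
    linear_combination (-(t : ℂ) * (A l a : ℂ)) * Complex.I_sq
  -- exp of the real matrix vs complex matrix
  have hQmap : exp ((t • A).map (Complex.ofReal)) = Q.map (Complex.ofReal) := by
    letI : SeminormedRing (Matrix (Fin (2*L)) (Fin (2*L)) ℝ) := Matrix.linftyOpSemiNormedRing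
    letI : NormedRing (Matrix (Fin (2*L)) (Fin (2*L)) ℝ) := Matrix.linftyOpNormedRing
    letI : NormedAlgebra ℝ (Matrix (Fin (2*L)) (Fin (2*L)) ℝ) := Matrix.linftyOpNormedAlgebra
    letI : NormedAlgebra ℚ (Matrix (Fin (2*L)) (Fin (2*L)) ℝ) := Matrix.linftyOpNormedAlgebra
    letI : SeminormedRing (Matrix (Fin (2*L)) (Fin (2*L)) ℂ) := Matrix.linftyOpSemiNormedRing
    letI : NormedRing (Matrix (Fin (2*L)) (Fin (2*L)) ℂ) := Matrix.linftyOpNormedRing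
    letI : NormedAlgebra ℝ (Matrix (Fin (2*L)) (Fin (2*L)) ℂ) := Matrix.linftyOpNormedAlgebra
    letI : NormedAlgebra ℚ (Matrix (Fin (2*L)) (Fin (2*L)) ℂ) := Matrix.linftyOpNormedAlgebra
    have hcont : Continuous fun M : Matrix (Fin (2*L)) (Fin (2*L)) ℝ =>
        (Complex.ofRealAm.mapMatrix M : Matrix (Fin (2*L)) (Fin (2*L)) ℂ) := by
      simp only [AlgHom.mapMatrix_apply]
      exact Continuous.matrix_map continuous_id Complex.continuous_ofReal
    have h2 := map_exp (Complex.ofRealAm.mapMatrix :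
        Matrix (Fin (2*L)) (Fin (2*L)) ℝ →ₐ[ℝ] Matrix (Fin (2*L)) (Fin (2*L)) ℂ) hcont (t • A)
    simp only [AlgHom.mapMatrix_apply] at h2
    have hco : ⇑Complex.ofRealAm = Complex.ofReal := rfl
    rw [hco] at h2
    rw [hQdef]; exact h2.symm
  -- conjugation of Majorana operators
  have hconj : ∀ a, exp (-X) * m a * exp X = ∑ b, ((Q a b : ℝ) : ℂ) • m b := by
    intro a
    letI : SeminormedRing (Matrix (Fin n) (Fin n) ℂ) := Matrix.linftyOpSemiNormedRing
    letI : NormedRing (Matrix (Fin n) (Fin n) ℂ) := Matrix.linftyOpNormedRing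
    letI : NormedAlgebra ℂ (Matrix (Fin n) (Fin n) ℂ) := Matrix.linftyOpNormedAlgebra
    have h3 := conj_exp_of_bracket (-X) m ((t • A).map (Complex.ofReal)) hbr a
    rw [neg_neg] at h3
    rw [hQmap] at h3
    exact h3.trans (Finset.sum_congr rfl fun b _ => rfl)
  -- unitarity
  have hEE : exp X * exp (-X) = 1 := by
    rw [← Matrix.exp_add_of_commute X (-X) (Commute.neg_right (Commute.refl X)),
      add_neg_cancel, exp_zero]
  -- conjugate transpose
  have hHH : Hᴴ = H := by
    rw [hH]
    rw [Matrix.conjTranspose_smul]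
    have hS : (∑ j, ∑ k, (A j k : ℂ) • (m j * m k))ᴴ
        = ∑ j, ∑ k, (A j k : ℂ) • (m k * m j) := by
      simp [Matrix.conjTranspose_sum, Matrix.conjTranspose_smul, Matrix.conjTranspose_mul, hsa,
        Complex.conj_ofReal]
    rw [hS]
    have hA' : ∀ a b, (A a b : ℂ) = -(A b a : ℂ) := by
      intro a b
      have := congr_fun (congr_fun hA b) a
      simp only [Matrix.transpose_apply, Matrix.neg_apply] at this
      rw [this]; push_cast; ring
    have hswap : (∑ j, ∑ k, (A j k : ℂ) • (m k * m j))
        = -∑ j, ∑ k, (A j k : ℂ) • (m j * m k) := by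
      rw [Finset.sum_comm]
      rw [← Finset.sum_neg_distrib]
      refine Finset.sum_congr rfl fun j _ => ?_
      rw [← Finset.sum_neg_distrib]
      refine Finset.sum_congr rfl fun k _ => ?_
      rw [hA' k j, neg_smul]
    rw [hswap, smul_neg, ← neg_smul]
    congr 1
    simp [Complex.ext_iff]
    norm_num
  have hU : (exp X)ᴴ = exp (-X) := by
    have hXH : Xᴴ = -X := by
      rw [hXdef, Matrix.conjTranspose_smul, hHH]
      simp only [neg_smul, neg_neg]
      congr 1
      simp [Complex.ext_iff]
    rw [← Matrix.exp_conjTranspose, hXH]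
  -- main trace computation
  have htrace : ∀ j k : Fin (2 * L),
      ((m j * m k - m k * m j) * (exp X * ρ * (exp X)ᴴ)).trace
        = ∑ a, ∑ b, ((Q j a : ℂ) * (Q k b : ℂ)) * ((m a * m b - m b * m a) * ρ).trace := by
    intro j k
    rw [hU]
    have hcyc : ((m j * m k - m k * m j) * (exp X * ρ * exp (-X))).trace
        = ((exp (-X) * (m j * m k - m k * m j) * exp X) * ρ).trace := by
      rw [show (m j * m k - m k * m j) * (exp X * ρ * exp (-X))
            = ((m j * m k - m k * m j) * (exp X * ρ)) * exp (-X) from by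
          simp only [mul_assoc],
        Matrix.trace_mul_comm,
        show exp (-X) * ((m j * m k - m k * m j) * (exp X * ρ))
            = (exp (-X) * (m j * m k - m k * m j) * exp X) * ρ from by
          simp only [mul_assoc]]
    rw [hcyc]
    have hins : ∀ a b, exp (-X) * (m a * m b) * exp X
        = (exp (-X) * m a * exp X) * (exp (-X) * m b * exp X) := by
      intro a b
      calc exp (-X) * (m a * m b) * exp X
          = exp (-X) * m a * 1 * (m b * exp X) := by rw [mul_one]; simp only [mul_assoc]
        _ = exp (-X) * m a * (exp X * exp (-X)) * (m b * exp X) := by rw [hEE]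
        _ = (exp (-X) * m a * exp X) * (exp (-X) * m b * exp X) := by
            simp only [mul_assoc]
    have hC : exp (-X) * (m j * m k - m k * m j) * exp X
        = ∑ a, ∑ b, ((Q j a : ℂ) * (Q k b : ℂ)) • (m a * m b - m b * m a) := by
      rw [mul_sub, sub_mul, hins j k, hins k j, hconj j, hconj k]
      rw [Finset.sum_mul_sum, Finset.sum_mul_sum]
      rw [Finset.sum_comm (f := fun a b =>
        (((Q k a : ℝ) : ℂ) • m a) * (((Q j b : ℝ) : ℂ) • m b))]
      rw [← Finset.sum_sub_distrib]
      refine Finset.sum_congr rfl fun a _ => ?_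
      rw [← Finset.sum_sub_distrib]
      refine Finset.sum_congr rfl fun b _ => ?_
      rw [smul_mul_smul_comm, smul_mul_smul_comm, smul_sub]
      rw [mul_comm ((Q k b : ℂ)) ((Q j a : ℂ))]
    rw [hC]
    simp only [Finset.sum_mul, Matrix.trace_sum, smul_mul_assoc, Matrix.trace_smul, smul_eq_mul]
  -- conclusion, entrywise
  ext j k
  show (Complex.I / 2 * ((m j * m k - m k * m j) * (exp X * ρ * (exp X)ᴴ)).trace).re
      = (Q * covarianceMatrix m ρ * Qᵀ) j k
  rw [htrace j k]
  simp only [Finset.mul_sum, Complex.re_sum]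
  rw [show (Q * covarianceMatrix m ρ * Qᵀ) j k
      = ∑ b, ∑ a, Q j a * covarianceMatrix m ρ a b * Q k b from by
    simp only [Matrix.mul_apply, Matrix.transpose_apply, Finset.sum_mul]]
  rw [Finset.sum_comm (f := fun b a => Q j a * covarianceMatrix m ρ a b * Q k b)]
  refine Finset.sum_congr rfl fun a _ => ?_
  refine Finset.sum_congr rfl fun b _ => ?_
  rw [show Complex.I / 2 * ((Q j a : ℂ) * (Q k b : ℂ)
        * ((m a * m b - m b * m a) * ρ).trace)
      = ((Q j a * Q k b : ℝ) : ℂ) * (Complex.I / 2 * ((m a * m b - m b * m a) * ρ).trace) from by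
    push_cast; ring]
  rw [Complex.re_ofReal_mul]
  show Q j a * Q k b * covarianceMatrix m ρ a b = Q j a * covarianceMatrix m ρ a b * Q k b
  ring
end

section
/- Let m_1, …, m_{2L} be a Majorana representation by n×n complex matrices. For k = 1, …, L define the number operators n_k := (1/2)(1 + i m_{2k−1} m_{2k}), and for ω ∈ {0,1}^L define n^{(ω)} := Σ_{k=1}^L [(1 − ω_k) n_k + ω_k (1 − n_k)]. Let U be an n×n unitary and Q ∈ ℝ^{2L×2L} a real orthogonal matrix such that U† m_j U = Σ_{k=1}^{2L} Q_{j,k} m_k for all j. Define M_ω := ⊕_{k=1}^L (1 − 2ω_k) · [[0, −1], [1, 0]] ∈ ℝ^{2L×2L} and M_t := Q M_ω Qᵀ. Then for every n×n density matrix ρ_p, tr(U (1 − n^{(ω)}) U† · ρ_p) = 1 + (1/4) tr[(M(ρ_p) − M_t)ᵀ M_t]. -/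
/-!
**Statement 12** (Fidelity witness in terms of covariance matrices, Eq. (9) of the paper).

Let `m : Fin L × Fin 2 → Matrix (Fin n) (Fin n) ℂ` be a Majorana representation, where
the pair `(k, 0)` stands for the Majorana index `2k−1` and `(k, 1)` for `2k`.  With the
number operators `n_k := (1/2)(1 + i m_{2k−1} m_{2k})`, the flipped number operator
`n^{(ω)} := ∑_k [(1−ω_k) n_k + ω_k (1 − n_k)]`, a unitary `U` acting on modes via a real
orthogonal `Q` (`U† m_j U = ∑_k Q_{jk} m_k`), `M_ω := ⊕_k (1−2ω_k)·[[0,−1],[1,0]]` and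
`M_t := Q M_ω Qᵀ`, for every density matrix `ρ_p`:
`tr(U (1 − n^{(ω)}) U† ρ_p) = 1 + (1/4) tr[(M(ρ_p) − M_t)ᵀ M_t]`.
-/

open Matrix
open scoped ComplexOrder

theorem witness_eq_covariance_overlap {L n : ℕ}
    (m : Fin L × Fin 2 → Matrix (Fin n) (Fin n) ℂ)
    (hsa : ∀ p, (m p)ᴴ = m p)
    (hcar : ∀ p q, m p * m q + m q * m p = if p = q then (2 : ℂ) • 1 else 0)
    (ω : Fin L → Fin 2)
    (U : Matrix (Fin n) (Fin n) ℂ) (hU : U ∈ Matrix.unitaryGroup (Fin n) ℂ)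
    (Q : Matrix (Fin L × Fin 2) (Fin L × Fin 2) ℝ) (hQ : Qᵀ * Q = 1)
    (hmode : ∀ p, Uᴴ * m p * U = ∑ q, (Q p q : ℂ) • m q)
    (nop : Fin L → Matrix (Fin n) (Fin n) ℂ)
    (hnop : ∀ k, nop k = (2 : ℂ)⁻¹ • (1 + Complex.I • (m (k, 0) * m (k, 1))))
    (nω : Matrix (Fin n) (Fin n) ℂ)
    (hnω : nω = ∑ k, ((1 - ((ω k : ℕ) : ℂ)) • nop k + ((ω k : ℕ) : ℂ) • (1 - nop k)))
    (Mω Mt : Matrix (Fin L × Fin 2) (Fin L × Fin 2) ℝ)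
    (hMω : Mω = ∑ k, (Matrix.single (k, 0) (k, 1) (-(1 - 2 * ((ω k : ℕ) : ℝ)))
      + Matrix.single (k, 1) (k, 0) (1 - 2 * ((ω k : ℕ) : ℝ))))
    (hMt : Mt = Q * Mω * Qᵀ) :
    ∀ ρp : Matrix (Fin n) (Fin n) ℂ, ρp.PosSemidef → ρp.trace = 1 →
      (U * (1 - nω) * Uᴴ * ρp).trace
        = 1 + (((4 : ℝ)⁻¹ * ((covarianceMatrix m ρp - Mt)ᵀ * Mt).trace : ℝ) : ℂ) := by
  intro ρp hpsd htr
  classical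
  set M : Matrix (Fin L × Fin 2) (Fin L × Fin 2) ℝ := covarianceMatrix m ρp with hM
  set s : Fin L → ℝ := fun k => 1 - 2 * ((ω k : ℕ) : ℝ) with hs
  set t : (Fin L × Fin 2) → (Fin L × Fin 2) → ℂ := fun p q => ((m p * m q) * ρp).trace with ht
  set T : Fin L → ℝ := fun k => ∑ p, ∑ q, Q p (k, 0) * Q q (k, 1) * M p q with hT
  have hU1 : Uᴴ * U = 1 := by
    have := hU.1
    simpa [Matrix.star_eq_conjTranspose] using this
  have hU2 : U * Uᴴ = 1 := by
    have := hU.2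
    simpa [Matrix.star_eq_conjTranspose] using this
  have hρ : ρpᴴ = ρp := hpsd.1
  -- anticommutation at the trace level
  have hanti : ∀ p q, t p q + t q p = if p = q then 2 else 0 := by
    intro p q
    by_cases hpq : p = q
    · subst hpq
      have h := congrArg (fun A => (A * ρp).trace) (hcar p p)
      simp only [if_pos rfl, Matrix.add_mul, Matrix.trace_add, Matrix.smul_mul,
        Matrix.one_mul, Matrix.trace_smul, htr, smul_eq_mul, mul_one] at h
      simpa [ht, htr, if_pos rfl] using h
    · have h := congrArg (fun A => (A * ρp).trace) (hcar p q)
      simp only [if_neg hpq, Matrix.add_mul, Matrix.trace_add, Matrix.zero_mul,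
        Matrix.trace_zero] at h
      simpa [ht, if_neg hpq] using h
  have hstar : ∀ p q, (starRingEnd ℂ) (t p q) = t q p := by
    intro p q
    have h1 : (starRingEnd ℂ) (t p q) = ((m p * m q * ρp)ᴴ).trace := by
      rw [Matrix.trace_conjTranspose]; rfl
    rw [h1, Matrix.conjTranspose_mul, Matrix.conjTranspose_mul, hsa, hsa, hρ,
      Matrix.trace_mul_comm]
  have hMC : ∀ p q, ((M p q : ℝ) : ℂ) = Complex.I / 2 * (t p q - t q p) := by
    intro p q
    have hz : (starRingEnd ℂ) (Complex.I / 2 * (t p q - t q p))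
        = Complex.I / 2 * (t p q - t q p) := by
      rw [_root_.map_mul, map_sub, hstar, hstar, map_div₀, Complex.conj_I]
      have : (starRingEnd ℂ) 2 = 2 := by simpa using Complex.conj_ofReal 2
      rw [this]; ring
    have hMre : M p q = (Complex.I / 2 * (t p q - t q p)).re := by
      simp [hM, covarianceMatrix, Matrix.sub_mul, Matrix.trace_sub, ht]
    rw [hMre, Complex.conj_eq_iff_re.mp hz]
  have hMskew : ∀ p q, M q p = - M p q := by
    intro p q
    have h1 := hMC p q
    have h2 := hMC q p
    have : ((M q p : ℝ) : ℂ) = ((- M p q : ℝ) : ℂ) := by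
      rw [h2]; push_cast; rw [h1]; ring
    exact_mod_cast this
  have htval : ∀ p q, t p q = (if p = q then 1 else 0) - Complex.I * ((M p q : ℝ) : ℂ) := by
    intro p q
    by_cases hpq : p = q
    · subst hpq
      have h1 := hanti p p
      have h2 := hMC p p
      rw [if_pos rfl] at h1 ⊢
      linear_combination (1/2 : ℂ) * h1 + Complex.I * h2
    · have h1 := hanti p q
      have h2 := hMC p q
      rw [if_neg hpq] at h1 ⊢
      linear_combination (1/2 : ℂ) * h1 + Complex.I * h2
        + ((t p q - t q p)/2) * Complex.I_sq
  -- orthogonality entrywise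
  have hQe : ∀ r q, (∑ p, Q p r * Q p q) = if r = q then (1:ℝ) else 0 := by
    intro r q
    have := congrFun (congrFun hQ r) q
    simpa [Matrix.mul_apply, Matrix.transpose_apply, Matrix.one_apply] using this
  -- inverse mode transformation
  have hinv : ∀ r, U * m r * Uᴴ = ∑ p, ((Q p r : ℝ) : ℂ) • m p := by
    intro r
    have h1 : Uᴴ * ((∑ p, ((Q p r : ℝ) : ℂ) • m p) * U) = m r := by
      rw [Finset.sum_mul, Finset.mul_sum]
      have step : ∀ p ∈ Finset.univ, Uᴴ * (((Q p r : ℝ) : ℂ) • m p * U)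
          = ∑ q, (((Q p r : ℝ) : ℂ) * ((Q p q : ℝ) : ℂ)) • m q := by
        intro p _
        rw [Matrix.smul_mul, Matrix.mul_smul]
        rw [show Uᴴ * (m p * U) = Uᴴ * m p * U from (Matrix.mul_assoc _ _ _).symm]
        rw [hmode p, Finset.smul_sum]
        exact Finset.sum_congr rfl fun q _ => smul_smul _ _ _
      rw [Finset.sum_congr rfl step, Finset.sum_comm]
      have step2 : ∀ q ∈ Finset.univ,
          (∑ p, (((Q p r : ℝ) : ℂ) * ((Q p q : ℝ) : ℂ)) • m q)
          = (if r = q then (1:ℂ) else 0) • m q := by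
        intro q _
        rw [← Finset.sum_smul]
        congr 1
        have : (∑ p, ((Q p r : ℝ) : ℂ) * ((Q p q : ℝ) : ℂ))
            = (((∑ p, Q p r * Q p q : ℝ)) : ℂ) := by push_cast; rfl
        rw [this, hQe r q]
        split_ifs <;> norm_num
      rw [Finset.sum_congr rfl step2]
      simp [ite_smul]
    conv_lhs => rw [← h1]
    rw [← Matrix.mul_assoc, ← Matrix.mul_assoc, hU2, Matrix.one_mul, Matrix.mul_assoc,
      hU2, Matrix.mul_one]
  -- product of two transformed Majoranas
  have hmm : ∀ k : Fin L, U * (m (k, 0) * m (k, 1)) * Uᴴ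
      = (∑ p, ((Q p (k, 0) : ℝ) : ℂ) • m p) * (∑ q, ((Q q (k, 1) : ℝ) : ℂ) • m q) := by
    intro k
    rw [← hinv, ← hinv]
    simp only [Matrix.mul_assoc]
    rw [← Matrix.mul_assoc Uᴴ U, hU1, Matrix.one_mul]
  -- trace of conjugated number operator
  have hkey : ∀ k : Fin L, (U * nop k * Uᴴ * ρp).trace
      = 1/2 + Complex.I / 2 * ∑ p, ∑ q,
          ((Q p (k, 0) : ℝ) : ℂ) * ((Q q (k, 1) : ℝ) : ℂ) * t p q := by
    intro k
    have e1 : U * nop k * Uᴴ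
        = (2:ℂ)⁻¹ • (1 + Complex.I •
            ((∑ p, ((Q p (k, 0) : ℝ) : ℂ) • m p) * (∑ q, ((Q q (k, 1) : ℝ) : ℂ) • m q))) := by
      rw [hnop, ← hmm k, Matrix.mul_smul, Matrix.smul_mul]
      congr 1
      rw [Matrix.mul_add, Matrix.add_mul, Matrix.mul_one, hU2, Matrix.mul_smul,
        Matrix.smul_mul]
    have e2 : ((∑ p, ((Q p (k, 0) : ℝ) : ℂ) • m p) * (∑ q, ((Q q (k, 1) : ℝ) : ℂ) • m q) * ρp).trace
        = ∑ p, ∑ q, ((Q p (k, 0) : ℝ) : ℂ) * ((Q q (k, 1) : ℝ) : ℂ) * t p q := by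
      simp only [Finset.sum_mul, Finset.mul_sum, Matrix.smul_mul, Matrix.mul_smul,
        Matrix.trace_sum, Matrix.trace_smul, smul_eq_mul, smul_smul]
      rw [Finset.sum_comm]
      refine Finset.sum_congr rfl fun p _ => Finset.sum_congr rfl fun q _ => ?_
      simp only [ht, Matrix.mul_assoc]
      ring
    rw [e1, Matrix.smul_mul, Matrix.trace_smul, Matrix.add_mul, Matrix.one_mul,
      Matrix.trace_add, htr, Matrix.smul_mul, Matrix.trace_smul, e2, smul_eq_mul, smul_eq_mul]
    ring
  -- key scalar identity
  have hSsum : ∀ k : Fin L, (∑ p, ∑ q,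
      ((Q p (k, 0) : ℝ) : ℂ) * ((Q q (k, 1) : ℝ) : ℂ) * t p q)
      = - Complex.I * ((T k : ℝ) : ℂ) := by
    intro k
    have expand : ∀ p q : Fin L × Fin 2,
        ((Q p (k, 0) : ℝ) : ℂ) * ((Q q (k, 1) : ℝ) : ℂ) * t p q
        = ((Q p (k, 0) : ℝ) : ℂ) * ((Q q (k, 1) : ℝ) : ℂ) * (if p = q then 1 else 0)
          - Complex.I * (((Q p (k, 0) * Q q (k, 1) * M p q : ℝ)) : ℂ) := by
      intro p q
      rw [htval p q]; push_cast; ring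
    simp only [expand]
    simp only [Finset.sum_sub_distrib]
    have first : (∑ p, ∑ q, ((Q p (k, 0) : ℝ) : ℂ) * ((Q q (k, 1) : ℝ) : ℂ)
        * (if p = q then (1:ℂ) else 0)) = 0 := by
      have : ∀ p : Fin L × Fin 2, (∑ q, ((Q p (k, 0) : ℝ) : ℂ) * ((Q q (k, 1) : ℝ) : ℂ)
          * (if p = q then (1:ℂ) else 0)) = ((Q p (k, 0) : ℝ) : ℂ) * ((Q p (k, 1) : ℝ) : ℂ) := by
        intro p
        rw [Finset.sum_eq_single p]
        · rw [if_pos rfl, mul_one]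
        · intro b _ hb
          rw [if_neg (Ne.symm hb), mul_zero]
        · intro h
          exact absurd (Finset.mem_univ p) h
      simp only [this]
      have : (∑ p, ((Q p (k, 0) : ℝ) : ℂ) * ((Q p (k, 1) : ℝ) : ℂ))
          = (((∑ p, Q p (k, 0) * Q p (k, 1) : ℝ)) : ℂ) := by push_cast; rfl
      rw [this, hQe (k, 0) (k, 1)]
      simp
    rw [first, zero_sub]
    have : (∑ p, ∑ q, Complex.I * (((Q p (k, 0) * Q q (k, 1) * M p q : ℝ)) : ℂ))
        = Complex.I * ((T k : ℝ) : ℂ) := by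
      simp only [hT]
      push_cast
      rw [Finset.mul_sum]
      refine Finset.sum_congr rfl fun p _ => ?_
      rw [Finset.mul_sum]
    rw [this]; ring
  have hak : ∀ k : Fin L, (U * nop k * Uᴴ * ρp).trace = 1/2 + ((T k : ℝ) : ℂ)/2 := by
    intro k
    rw [hkey k, hSsum k]
    linear_combination (-((T k : ℝ) : ℂ)/2) * Complex.I_sq
  -- LHS
  have hLHS : (U * (1 - nω) * Uᴴ * ρp).trace
      = 1 - (L : ℂ)/2 - 2⁻¹ * ∑ k, ((s k : ℝ) : ℂ) * ((T k : ℝ) : ℂ) := by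
    have e0 : U * (1 - nω) * Uᴴ * ρp = ρp - U * nω * Uᴴ * ρp := by
      simp only [Matrix.mul_sub, Matrix.sub_mul, Matrix.mul_one, Matrix.mul_assoc]
      rw [← Matrix.mul_assoc U Uᴴ ρp, hU2, Matrix.one_mul]
    rw [e0, Matrix.trace_sub, htr]
    have e1 : (U * nω * Uᴴ * ρp).trace
        = ∑ k, ((1 - ((ω k : ℕ) : ℂ)) * (U * nop k * Uᴴ * ρp).trace
            + ((ω k : ℕ) : ℂ) * (1 - (U * nop k * Uᴴ * ρp).trace)) := by
      rw [hnω, Finset.mul_sum, Finset.sum_mul, Finset.sum_mul, Matrix.trace_sum]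
      refine Finset.sum_congr rfl fun k _ => ?_
      have d1 : U * ((1 - ((ω k : ℕ) : ℂ)) • nop k + ((ω k : ℕ) : ℂ) • (1 - nop k)) * Uᴴ * ρp
          = (1 - ((ω k : ℕ) : ℂ)) • (U * nop k * Uᴴ * ρp)
            + ((ω k : ℕ) : ℂ) • (ρp - U * nop k * Uᴴ * ρp) := by
        simp only [Matrix.mul_add, Matrix.add_mul, Matrix.mul_smul, Matrix.smul_mul,
          Matrix.mul_sub, Matrix.sub_mul, Matrix.mul_one, Matrix.one_mul, Matrix.mul_assoc,
          smul_sub]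
        rw [← Matrix.mul_assoc U Uᴴ ρp, hU2, Matrix.one_mul]
      rw [d1, Matrix.trace_add, Matrix.trace_smul, Matrix.trace_smul, Matrix.trace_sub, htr,
        smul_eq_mul, smul_eq_mul]
    rw [e1]
    have e2 : ∀ k : Fin L, ((1 - ((ω k : ℕ) : ℂ)) * (U * nop k * Uᴴ * ρp).trace
        + ((ω k : ℕ) : ℂ) * (1 - (U * nop k * Uᴴ * ρp).trace))
        = 1/2 + ((s k : ℝ) : ℂ) * ((T k : ℝ) : ℂ) / 2 := by
      intro k
      rw [hak k]
      simp only [hs]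
      push_cast
      ring
    rw [Finset.sum_congr rfl fun k _ => e2 k, Finset.sum_add_distrib]
    simp only [Finset.sum_const, Finset.card_univ, Fintype.card_fin, nsmul_eq_mul]
    rw [Finset.mul_sum]
    push_cast
    ring_nf
  -- trace against Mω
  have hBE : ∀ (B : Matrix (Fin L × Fin 2) (Fin L × Fin 2) ℝ) (i j : Fin L × Fin 2) (c : ℝ),
      (B * Matrix.single i j c).trace = B j i * c := by
    intro B i j c
    simp [Matrix.trace, Matrix.diag, Matrix.mul_apply, Matrix.single, ite_and,
      mul_ite, mul_zero, Finset.sum_ite_eq, Finset.sum_ite_eq']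
  have hTrBMω : ∀ B : Matrix (Fin L × Fin 2) (Fin L × Fin 2) ℝ,
      (B * Mω).trace = ∑ k, s k * (B (k, 0) (k, 1) - B (k, 1) (k, 0)) := by
    intro B
    rw [hMω, Finset.mul_sum, Matrix.trace_sum]
    refine Finset.sum_congr rfl fun k _ => ?_
    rw [Matrix.mul_add, Matrix.trace_add, hBE, hBE]
    simp only [hs]
    ring
  have hAt : ∀ A : Matrix (Fin L × Fin 2) (Fin L × Fin 2) ℝ,
      (Aᵀ * Mt).trace
        = ∑ k, s k * ((Qᵀ * Aᵀ * Q) (k, 0) (k, 1) - (Qᵀ * Aᵀ * Q) (k, 1) (k, 0)) := by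
    intro A
    rw [hMt]
    have h1 : Aᵀ * (Q * Mω * Qᵀ) = (Aᵀ * Q * Mω) * Qᵀ := by
      simp only [Matrix.mul_assoc]
    rw [h1, Matrix.trace_mul_comm]
    have h2 : Qᵀ * (Aᵀ * Q * Mω) = (Qᵀ * Aᵀ * Q) * Mω := by
      simp only [Matrix.mul_assoc]
    rw [h2, hTrBMω]
  have hentry : ∀ (A : Matrix (Fin L × Fin 2) (Fin L × Fin 2) ℝ) (i j : Fin L × Fin 2),
      (Qᵀ * Aᵀ * Q) i j = ∑ q, ∑ p, Q p i * A q p * Q q j := by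
    intro A i j
    rw [Matrix.mul_apply]
    refine Finset.sum_congr rfl fun q _ => ?_
    rw [Matrix.mul_apply, Finset.sum_mul]
    refine Finset.sum_congr rfl fun p _ => ?_
    simp [Matrix.transpose_apply]
  have hMT1 : ∀ k : Fin L, (Qᵀ * Mᵀ * Q) (k, 0) (k, 1) = - T k := by
    intro k
    rw [hentry, Finset.sum_comm]
    simp only [hT, ← Finset.sum_neg_distrib]
    exact Finset.sum_congr rfl fun p _ => Finset.sum_congr rfl fun q _ => by
      rw [hMskew p q]; ring
  have hMT2 : ∀ k : Fin L, (Qᵀ * Mᵀ * Q) (k, 1) (k, 0) = T k := by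
    intro k
    rw [hentry]
    simp only [hT]
    exact Finset.sum_congr rfl fun x _ => Finset.sum_congr rfl fun y _ => by ring
  have hMtT : Qᵀ * Mtᵀ * Q = Mωᵀ := by
    rw [hMt, Matrix.transpose_mul, Matrix.transpose_mul, Matrix.transpose_transpose]
    rw [← Matrix.mul_assoc Qᵀ Q, hQ, Matrix.one_mul, Matrix.mul_assoc, hQ, Matrix.mul_one]
  have hMωe0 : ∀ k : Fin L, Mω (k, 0) (k, 1) = - s k := by
    intro k
    rw [hMω]
    simp [Matrix.sum_apply, Matrix.add_apply, Matrix.single, Prod.ext_iff,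
      Finset.sum_ite_eq, hs]
  have hMωe1 : ∀ k : Fin L, Mω (k, 1) (k, 0) = s k := by
    intro k
    rw [hMω]
    simp [Matrix.sum_apply, Matrix.add_apply, Matrix.single, Prod.ext_iff,
      Finset.sum_ite_eq, hs]
  have hs2 : ∀ k : Fin L, s k * s k = 1 := by
    intro k
    simp only [hs]
    have hlt := (ω k).isLt
    have : (ω k : ℕ) = 0 ∨ (ω k : ℕ) = 1 := by omega
    rcases this with h | h <;> rw [h] <;> norm_num
  have hMtr : ((M - Mt)ᵀ * Mt).trace = (-2) * (∑ k, s k * T k) - 2 * L := by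
    rw [Matrix.transpose_sub, Matrix.sub_mul, Matrix.trace_sub, hAt M, hAt Mt]
    have e1 : ∑ k, s k * ((Qᵀ * Mᵀ * Q) (k, 0) (k, 1) - (Qᵀ * Mᵀ * Q) (k, 1) (k, 0))
        = (-2) * ∑ k, s k * T k := by
      rw [Finset.mul_sum]
      exact Finset.sum_congr rfl fun k _ => by rw [hMT1 k, hMT2 k]; ring
    have e2 : ∑ k, s k * ((Qᵀ * Mtᵀ * Q) (k, 0) (k, 1) - (Qᵀ * Mtᵀ * Q) (k, 1) (k, 0))
        = 2 * L := by
      have step : ∀ k ∈ Finset.univ,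
          s k * ((Qᵀ * Mtᵀ * Q) (k, 0) (k, 1) - (Qᵀ * Mtᵀ * Q) (k, 1) (k, 0)) = 2 := by
        intro k _
        rw [hMtT, Matrix.transpose_apply, Matrix.transpose_apply, hMωe1 k, hMωe0 k]
        have := hs2 k
        nlinarith [hs2 k]
      rw [Finset.sum_congr rfl step]
      simp [Finset.card_univ, mul_comm]
    rw [e1, e2]
  rw [hLHS, hMtr]
  simp only [hs]
  push_cast
  ring
end

section
/- Let M_t, M_p ∈ ℝ^{2L×2L} be antisymmetric matrices, let Ω := {(j,k) : 1 ≤ j < k ≤ 2L, (M_t)_{j,k} ≠ 0}, and let c := Σ_{(j,k)∈Ω} |(M_t)_{j,k}|, assumed positive. Suppose for each (j,k) ∈ Ω and each β ∈ {+1, −1} one is given p_{β|j,k} ∈ [0,1] with p_{+1|j,k} + p_{−1|j,k} = 1 and p_{+1|j,k} − p_{−1|j,k} = (M_p)_{j,k}. Define P_{β,j,k} := p_{β|j,k} · |(M_t)_{j,k}| / c and X_{β,j,k} := 2 c β · sgn((M_t)_{j,k}). Then (P_{β,j,k})_{β∈{±1},(j,k)∈Ω} is a probability distribution (all values nonnegative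 and summing to 1), and Σ_{β∈{±1}} Σ_{(j,k)∈Ω} P_{β,j,k} X_{β,j,k} = tr(M_pᵀ M_t). -/
open Matrix

private lemma sign_mul_abs' (x : ℝ) : Real.sign x * |x| = x := by
  rcases lt_trichotomy x 0 with h | h | h
  · rw [Real.sign_of_neg h, abs_of_neg h]; ring
  · simp [h]
  · rw [Real.sign_of_pos h, abs_of_pos h]; ring

theorem importance_sampling_mean {L : ℕ}
    (Mt Mp : Matrix (Fin (2 * L)) (Fin (2 * L)) ℝ)
    (hMt : Mtᵀ = -Mt) (hMp : Mpᵀ = -Mp)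
    (Ω : Finset (Fin (2 * L) × Fin (2 * L)))
    (hΩ : Ω = Finset.univ.filter (fun p => p.1 < p.2 ∧ Mt p.1 p.2 ≠ 0))
    (c : ℝ) (hc : c = ∑ p ∈ Ω, |Mt p.1 p.2|) (hcpos : 0 < c)
    (pc : Bool → Fin (2 * L) × Fin (2 * L) → ℝ)
    (hpc01 : ∀ β, ∀ p ∈ Ω, pc β p ∈ Set.Icc (0 : ℝ) 1)
    (hpcsum : ∀ p ∈ Ω, pc true p + pc false p = 1)
    (hpcdiff : ∀ p ∈ Ω, pc true p - pc false p = Mp p.1 p.2)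
    (P X : Bool → Fin (2 * L) × Fin (2 * L) → ℝ)
    (hP : ∀ β p, P β p = pc β p * |Mt p.1 p.2| / c)
    (hX : ∀ β p, X β p = 2 * c * (if β then 1 else -1) * Real.sign (Mt p.1 p.2)) :
    (∀ β, ∀ p ∈ Ω, 0 ≤ P β p) ∧
      (∑ β : Bool, ∑ p ∈ Ω, P β p) = 1 ∧
      (∑ β : Bool, ∑ p ∈ Ω, P β p * X β p) = (Mpᵀ * Mt).trace := by
  have hcne : c ≠ 0 := ne_of_gt hcpos
  have hMtanti : ∀ j k, Mt k j = - Mt j k := by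
    intro j k
    have := congrFun (congrFun hMt k) j
    simp only [Matrix.transpose_apply, Matrix.neg_apply] at this
    linarith
  have hMpanti : ∀ j k, Mp k j = - Mp j k := by
    intro j k
    have := congrFun (congrFun hMp k) j
    simp only [Matrix.transpose_apply, Matrix.neg_apply] at this
    linarith
  refine ⟨?_, ?_, ?_⟩
  · intro β p hp
    rw [hP]
    have h0 := (hpc01 β p hp).1
    positivity
  · rw [Fintype.sum_bool, ← Finset.sum_add_distrib]
    have : ∀ p ∈ Ω, P true p + P false p = |Mt p.1 p.2| / c := by
      intro p hp
      rw [hP, hP, ← add_div, ← add_mul, hpcsum p hp, one_mul]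
    rw [Finset.sum_congr rfl this, ← Finset.sum_div, ← hc, div_self hcne]
  · rw [Fintype.sum_bool, ← Finset.sum_add_distrib]
    have key : ∀ p ∈ Ω, P true p * X true p + P false p * X false p
        = 2 * (Mp p.1 p.2 * Mt p.1 p.2) := by
      intro p hp
      rw [hP, hP, hX, hX]
      have hd := hpcdiff p hp
      have hsa := sign_mul_abs' (Mt p.1 p.2)
      simp only [if_true, Bool.false_eq_true, if_false]
      have heq : pc true p * |Mt p.1 p.2| / c * (2 * c * 1 * Real.sign (Mt p.1 p.2)) +
          pc false p * |Mt p.1 p.2| / c * (2 * c * (-1) * Real.sign (Mt p.1 p.2))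
          = 2 * ((pc true p - pc false p) * (Real.sign (Mt p.1 p.2) * |Mt p.1 p.2|)) := by
        field_simp
        ring
      rw [heq, hsa, hd]
    rw [Finset.sum_congr rfl key]
    have htr : (Mpᵀ * Mt).trace = ∑ q : Fin (2*L) × Fin (2*L), Mp q.1 q.2 * Mt q.1 q.2 := by
      rw [Matrix.trace, Fintype.sum_prod_type]
      simp only [Matrix.diag_apply, Matrix.mul_apply, Matrix.transpose_apply]
      rw [Finset.sum_comm]
    rw [htr]
    set A := Finset.univ.filter (fun q : Fin (2*L) × Fin (2*L) => q.1 < q.2) with hA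
    set B := Finset.univ.filter (fun q : Fin (2*L) × Fin (2*L) => q.1 = q.2) with hB
    set C := Finset.univ.filter (fun q : Fin (2*L) × Fin (2*L) => q.2 < q.1) with hC
    have hd1 : Disjoint A (B ∪ C) := by
      rw [Finset.disjoint_left]
      intro q hq1 hq2
      simp only [hA, hB, hC, Finset.mem_filter, Finset.mem_union, Finset.mem_univ,
        true_and, Fin.lt_def, Fin.ext_iff] at hq1 hq2
      omega
    have hd2 : Disjoint B C := by
      rw [Finset.disjoint_left]
      intro q hq1 hq2
      simp only [hB, hC, Finset.mem_filter, Finset.mem_univ, true_and,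
        Fin.lt_def, Fin.ext_iff] at hq1 hq2
      omega
    have h1 : (Finset.univ : Finset (Fin (2*L) × Fin (2*L))) = A ∪ (B ∪ C) := by
      ext q
      simp only [hA, hB, hC, Finset.mem_union, Finset.mem_filter, Finset.mem_univ, true_and]
      rcases lt_trichotomy q.1 q.2 with h | h | h <;> tauto
    have hdiag : ∑ q ∈ B, Mp q.1 q.2 * Mt q.1 q.2 = 0 := by
      apply Finset.sum_eq_zero
      intro q hq
      simp only [hB, Finset.mem_filter] at hq
      have h2 := hMtanti q.1 q.2
      rw [hq.2] at h2 ⊢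
      have : Mt q.2 q.2 = 0 := by linarith
      simp [this]
    have hswap : ∑ q ∈ C, Mp q.1 q.2 * Mt q.1 q.2 = ∑ q ∈ A, Mp q.1 q.2 * Mt q.1 q.2 := by
      apply Finset.sum_equiv (Equiv.prodComm _ _)
      · intro q
        simp [hA, hC]
      · intro q hq
        simp only [Equiv.prodComm_apply, Prod.fst_swap, Prod.snd_swap]
        rw [hMpanti q.2 q.1, hMtanti q.2 q.1]
        ring
    have hsplit : ∑ q : Fin (2*L) × Fin (2*L), Mp q.1 q.2 * Mt q.1 q.2
        = 2 * ∑ q ∈ A, Mp q.1 q.2 * Mt q.1 q.2 := by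
      conv_lhs => rw [h1]
      rw [Finset.sum_union hd1, Finset.sum_union hd2, hdiag, hswap]
      ring
    rw [hsplit, Finset.mul_sum, hΩ]
    apply Finset.sum_subset
    · intro q hq
      simp only [Finset.mem_filter, hA] at hq ⊢
      exact ⟨hq.1, hq.2.1⟩
    · intro q hq hnq
      simp only [Finset.mem_filter, hA] at hq hnq
      have : Mt q.1 q.2 = 0 := by
        by_contra h
        exact hnq ⟨hq.1, hq.2, h⟩
      simp [this]
end
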